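/- arXiv:2509.03343 — 4 statements merged into one kernel-verified Lean document; each statement's English description precedes it below -/
import Mathlib

section
/- Let d ≥ 1 be an integer, β ∈ (0,2] with d/β = 3/2, and let b_β : (0,∞) → (0,∞) be a strictly increasing continuous function that is regularly varying of index 1/β. Set s_β(x) := b_β(x)·x^{−1/β} and g(n) := ∑_{k=1}^n k² b_β(k)^{−2d}. Then s_β(n)^d · √(g(n)) → ∞ as n → ∞. -/
open MeasureTheory Filter Topology

noncomputable section

/-- A function `f : (0,∞) → (0,∞)` is *regularly varying of index `κ`* if
`f (c x) / f x → c ^ κ` as `x → ∞`, for every `c > 0`. -/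
def RegularlyVarying (f : ℝ → ℝ) (κ : ℝ) : Prop :=
  ∀ c : ℝ, 0 < c → Filter.Tendsto (fun x => f (c * x) / f x) Filter.atTop (nhds (c ^ κ))

lemma aux_sum_div_tendsto (a : ℕ → ℝ) (ha : ∀ m, 0 < a m)
    (hratio : Tendsto (fun m => a m / a (m + 1)) atTop (nhds 1)) :
    Tendsto (fun M => (∑ m ∈ Finset.Icc 1 M, a m) / a M) atTop atTop := by
  have hshift : ∀ j : ℕ, Tendsto (fun M => a M / a (M + j)) atTop (nhds 1) := by
    intro j
    induction j with
    | zero =>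
      have : (fun M => a M / a (M + 0)) = fun _ => (1 : ℝ) :=
        funext fun M => by simp [div_self (ha M).ne']
      rw [this]; exact tendsto_const_nhds
    | succ j ih =>
      have h1 : Tendsto (fun M => a (M + 1) / a (M + 1 + j)) atTop (nhds 1) :=
        ih.comp (tendsto_add_atTop_nat 1)
      have h2 := hratio.mul h1
      rw [one_mul] at h2
      refine h2.congr fun M => ?_
      have hidx : M + (j + 1) = M + 1 + j := by omega
      rw [hidx, div_mul_div_comm, mul_comm (a M), mul_div_mul_left _ _ (ha (M+1)).ne']
  rw [tendsto_atTop]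
  intro C
  obtain ⟨N, hN⟩ := exists_nat_ge (C + 1)
  have hF : Tendsto (fun M => ∑ i ∈ Finset.range N, a (M + 1 + i) / a (M + N)) atTop
      (nhds (N : ℝ)) := by
    have hterm : ∀ i ∈ Finset.range N,
        Tendsto (fun M => a (M + 1 + i) / a (M + N)) atTop (nhds 1) := by
      intro i hi
      have hiN := Finset.mem_range.mp hi
      have h := (hshift (N - 1 - i)).comp (tendsto_add_atTop_nat (1 + i))
      refine h.congr fun M => ?_
      simp only [Function.comp_apply]
      have h1 : M + (1 + i) = M + 1 + i := by omega
      have h2 : M + (1 + i) + (N - 1 - i) = M + N := by omega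
      rw [h1] at h2 ⊢
      rw [h2]
    have := tendsto_finset_sum (Finset.range N) hterm
    simpa using this
  have hev : ∀ᶠ M in atTop, C ≤ ∑ i ∈ Finset.range N, a (M + 1 + i) / a (M + N) := by
    have hlt : C < (N : ℝ) := lt_of_lt_of_le (lt_add_one C) hN
    exact hF.eventually (eventually_ge_nhds hlt)
  obtain ⟨M₀, hM₀⟩ := eventually_atTop.mp hev
  rw [eventually_atTop]
  refine ⟨M₀ + N, fun M hM => ?_⟩
  set M' := M - N with hM'def
  have hMeq : M' + N = M := by omega
  have key : ∑ i ∈ Finset.range N, a (M' + 1 + i) ≤ ∑ m ∈ Finset.Icc 1 M, a m := by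
    have heq : ∑ i ∈ Finset.range N, a (M' + 1 + i)
        = ∑ m ∈ Finset.Ico (M' + 1) (M' + 1 + N), a m := by
      rw [Finset.sum_Ico_eq_sum_range]
      simp
    rw [heq]
    apply Finset.sum_le_sum_of_subset_of_nonneg
    · intro x hx
      simp only [Finset.mem_Ico] at hx
      simp only [Finset.mem_Icc]
      omega
    · intro i _ _
      exact (ha i).le
  calc C ≤ ∑ i ∈ Finset.range N, a (M' + 1 + i) / a (M' + N) := hM₀ M' (by omega)
    _ = (∑ i ∈ Finset.range N, a (M' + 1 + i)) / a M := by rw [← Finset.sum_div, hMeq]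
    _ ≤ (∑ m ∈ Finset.Icc 1 M, a m) / a M := by gcongr; exact (ha M).le

/-- If `d/β = 3/2`, `b` is strictly increasing, continuous and regularly varying of
index `1/β`, `s(x) := b(x) x^{-1/β}` and `g(n) := ∑_{k=1}^n k² b(k)^{-2d}`, then
`s(n)^d √(g(n)) → ∞`. -/
theorem tendsto_slowly_varying_pow_mul_sqrt_g_atTop
    (d : ℕ) (hd : 1 ≤ d) (β : ℝ) (hβ₀ : 0 < β) (hβ₂ : β ≤ 2)
    (hdb : (d : ℝ) / β = 3 / 2)
    (b : ℝ → ℝ) (hb_pos : ∀ x : ℝ, 0 < x → 0 < b x)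
    (hb_mono : StrictMonoOn b (Set.Ioi 0)) (hb_cont : ContinuousOn b (Set.Ioi 0))
    (hb_rv : RegularlyVarying b (1 / β)) :
    Tendsto
      (fun n : ℕ => (b n * (n : ℝ) ^ (-(1 / β))) ^ d *
        Real.sqrt (∑ k ∈ Finset.Icc 1 n, (k : ℝ) ^ 2 / b k ^ (2 * d)))
      atTop atTop := by
  have hmono : MonotoneOn b (Set.Ioi 0) := fun x hx y hy hxy =>
    hxy.lt_or_eq.elim (fun h => (hb_mono hx hy h).le) (fun h => h ▸ le_rfl)
  set G : ℕ → ℝ := fun n => ∑ k ∈ Finset.Icc 1 n, (k : ℝ) ^ 2 / b k ^ (2 * d) with hG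
  set a : ℕ → ℝ := fun m => (2 : ℝ) ^ (3 * m) / b ((2 : ℝ) ^ m) ^ (2 * d) with ha_def
  have hb2 : ∀ m : ℕ, 0 < b ((2 : ℝ) ^ m) := fun m => hb_pos _ (by positivity)
  have ha : ∀ m, 0 < a m := fun m => div_pos (by positivity) (pow_pos (hb2 m) _)
  have hd3 : (d : ℝ) = 3 * β / 2 := by
    field_simp at hdb; linarith
  have hexp : (1 / β) * ((2 * d : ℕ) : ℝ) = 3 := by
    push_cast
    rw [hd3]
    field_simp
  -- Step 1: ratio tends to 1
  have hratio : Tendsto (fun m => a m / a (m + 1)) atTop (nhds 1) := by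
    have hpow : Tendsto (fun m : ℕ => (2 : ℝ) ^ m) atTop atTop :=
      tendsto_pow_atTop_atTop_of_one_lt one_lt_two
    have h1 : Tendsto (fun m : ℕ => b (2 * (2 : ℝ) ^ m) / b ((2 : ℝ) ^ m)) atTop
        (nhds ((2 : ℝ) ^ (1 / β))) := (hb_rv 2 two_pos).comp hpow
    have h2 : Tendsto (fun m : ℕ => (b ((2 : ℝ) ^ (m + 1)) / b ((2 : ℝ) ^ m)) ^ (2 * d) / 8)
        atTop (nhds (((2 : ℝ) ^ (1 / β)) ^ (2 * d) / 8)) := by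
      have := (h1.pow (2 * d)).div_const 8
      refine this.congr fun m => ?_
      rw [pow_succ, mul_comm ((2:ℝ)^m) 2]
    have hval : ((2 : ℝ) ^ (1 / β)) ^ (2 * d) / 8 = 1 := by
      rw [← Real.rpow_natCast ((2 : ℝ) ^ (1 / β)) (2 * d),
        ← Real.rpow_mul (by norm_num : (0 : ℝ) ≤ 2), hexp]
      rw [show (3 : ℝ) = ((3 : ℕ) : ℝ) by norm_num, Real.rpow_natCast]
      norm_num
    rw [hval] at h2
    refine h2.congr fun m => ?_
    have hb1 := (hb2 m).ne'
    have hb1' := (hb2 (m + 1)).ne'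
    simp only [ha_def]
    rw [div_pow]
    have h8 : (2 : ℝ) ^ (3 * (m + 1)) = 8 * (2 : ℝ) ^ (3 * m) := by
      rw [show 3 * (m + 1) = 3 * m + 3 by ring, pow_add]; norm_num; ring
    rw [h8]
    field_simp
  have hcast : ∀ m : ℕ, ((2 ^ m : ℕ) : ℝ) = (2 : ℝ) ^ m := fun m => by push_cast; ring
  have hBnn : ∀ x : ℝ, 0 ≤ b x ^ (2 * d) := fun x => by
    have h := pow_nonneg (sq_nonneg (b x)) d
    rwa [← pow_mul] at h
  have hterm_nonneg : ∀ k : ℕ, 0 ≤ (k : ℝ) ^ 2 / b k ^ (2 * d) := fun k =>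
    div_nonneg (sq_nonneg _) (hBnn _)
  have hG_nonneg : ∀ n : ℕ, 0 ≤ G n := fun n => Finset.sum_nonneg fun k _ => hterm_nonneg k
  have hG_mono : ∀ {m n : ℕ}, m ≤ n → G m ≤ G n := by
    intro m n hmn
    apply Finset.sum_le_sum_of_subset_of_nonneg (Finset.Icc_subset_Icc_right hmn)
    intro k _ _; exact hterm_nonneg k
  have hIcc : ∀ n : ℕ, Finset.Icc 1 n = Finset.Ioc 0 n := by
    intro n; ext x; simp [Finset.mem_Icc, Finset.mem_Ioc]; omega
  -- Step 2
  have hstep2 : ∀ M : ℕ, (∑ m ∈ Finset.Icc 1 M, a m) / 8 ≤ G (2 ^ M) := by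
    intro M
    induction M with
    | zero => simpa using hG_nonneg 1
    | succ M ihM =>
      have hle : (2 : ℕ) ^ M ≤ 2 ^ (M + 1) := Nat.pow_le_pow_right (by norm_num) (Nat.le_succ M)
      have hsplit : G (2 ^ (M + 1)) = G (2 ^ M)
          + ∑ k ∈ Finset.Ioc ((2:ℕ) ^ M) (2 ^ (M + 1)), (k : ℝ) ^ 2 / b k ^ (2 * d) := by
        simp only [hG, hIcc]
        rw [← Finset.sum_Ioc_consecutive _ (Nat.zero_le _) hle]
      have hb' := hb2 (M + 1)
      have hcard : (Finset.Ioc ((2:ℕ) ^ M) (2 ^ (M + 1))).card = 2 ^ M := by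
        rw [Nat.card_Ioc]
        have h2 : (2 : ℕ) ^ (M + 1) = 2 * 2 ^ M := by rw [pow_succ]; ring
        omega
      have hlow : ∀ k ∈ Finset.Ioc ((2:ℕ) ^ M) (2 ^ (M + 1)),
          ((2 : ℝ) ^ M) ^ 2 / b ((2 : ℝ) ^ (M + 1)) ^ (2 * d) ≤ (k : ℝ) ^ 2 / b k ^ (2 * d) := by
        intro k hk
        obtain ⟨hk1, hk2⟩ := Finset.mem_Ioc.mp hk
        have hkpos : 0 < k := by
          have := Nat.one_le_two_pow (n := M); omega
        have hk0 : (0 : ℝ) < (k : ℝ) := by exact_mod_cast hkpos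
        have hbk : 0 < b k := hb_pos _ hk0
        have hkle : (k : ℝ) ≤ (2 : ℝ) ^ (M + 1) := by
          rw [← hcast]; exact_mod_cast hk2
        have hble : b k ≤ b ((2 : ℝ) ^ (M + 1)) :=
          hmono (Set.mem_Ioi.mpr hk0) (Set.mem_Ioi.mpr (by positivity)) hkle
        have hknum : ((2 : ℝ) ^ M) ^ 2 ≤ (k : ℝ) ^ 2 := by
          apply pow_le_pow_left₀ (by positivity)
          rw [← hcast]; exact_mod_cast hk1.le
        exact div_le_div₀ (sq_nonneg _) hknum (pow_pos hbk _) (pow_le_pow_left₀ hbk.le hble _)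
      have hblock : a (M + 1) / 8
          ≤ ∑ k ∈ Finset.Ioc ((2:ℕ) ^ M) (2 ^ (M + 1)), (k : ℝ) ^ 2 / b k ^ (2 * d) := by
        have hcs := Finset.card_nsmul_le_sum _ _ _ hlow
        rw [hcard, nsmul_eq_mul] at hcs
        refine le_trans (le_of_eq ?_) hcs
        simp only [ha_def]
        have h8 : (2 : ℝ) ^ (3 * (M + 1)) = 8 * (2 : ℝ) ^ (3 * M) := by
          rw [show 3 * (M + 1) = 3 * M + 3 by ring, pow_add]; norm_num; ring
        rw [h8]
        push_cast
        have h3M : (2 : ℝ) ^ (3 * M) = (2 : ℝ) ^ M * ((2 : ℝ) ^ M) ^ 2 := by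
          rw [← pow_mul, ← pow_add]
          congr 1
          ring
        rw [h3M]
        field_simp
      rw [Finset.sum_Icc_succ_top (by omega : 1 ≤ M + 1), hsplit, add_div]
      exact add_le_add ihM hblock
  -- Step 3
  have hdiv := aux_sum_div_tendsto a ha hratio
  -- Final assembly
  rw [tendsto_atTop]
  intro C
  set C' := max C 1 with hC'def
  have hC'pos : (0 : ℝ) < C' := lt_of_lt_of_le one_pos (le_max_right _ _)
  have hCC' : C ≤ C' := le_max_left _ _
  obtain ⟨M₀, hM₀⟩ := eventually_atTop.mp (tendsto_atTop.mp hdiv (64 * C' ^ 2))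
  filter_upwards [eventually_ge_atTop (2 ^ M₀)] with n hn
  have hn1 : 1 ≤ n := le_trans Nat.one_le_two_pow hn
  set M := Nat.log 2 n with hMdef
  have h2M : 2 ^ M ≤ n := Nat.pow_log_le_self 2 (by omega)
  have h2M' : n < 2 ^ (M + 1) := Nat.lt_pow_succ_log_self (by norm_num) n
  have hMM₀ : M₀ ≤ M := (Nat.le_log_iff_pow_le (by norm_num) (by omega)).mpr hn
  have hn0 : (0 : ℝ) < (n : ℝ) := by exact_mod_cast hn1
  have hbn : 0 < b n := hb_pos _ hn0
  show C ≤ (b n * (n : ℝ) ^ (-(1 / β))) ^ d * Real.sqrt (G n)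
  have hsq_eq : ((b n * (n : ℝ) ^ (-(1 / β))) ^ d * Real.sqrt (G n)) ^ 2
      = b n ^ (2 * d) * (((n : ℝ) ^ 3)⁻¹) * G n := by
    rw [mul_pow, ← pow_mul, Real.sq_sqrt (hG_nonneg n), mul_pow]
    congr 1
    congr 1
    · rw [mul_comm d 2]
    · rw [← Real.rpow_natCast ((n : ℝ) ^ (-(1 / β))) (d * 2), ← Real.rpow_mul hn0.le]
      have hneg3 : (-(1 / β)) * ((d * 2 : ℕ) : ℝ) = -3 := by
        push_cast
        push_cast at hexp
        linear_combination -hexp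
      rw [hneg3, show (-3 : ℝ) = -((3 : ℕ) : ℝ) by norm_num, Real.rpow_neg hn0.le,
        Real.rpow_natCast]
  have hbnle : b ((2 : ℝ) ^ M) ^ (2 * d) ≤ b n ^ (2 * d) := by
    apply pow_le_pow_left₀ (hb2 M).le
    apply hmono (Set.mem_Ioi.mpr (by positivity)) (Set.mem_Ioi.mpr hn0)
    rw [← hcast]; exact_mod_cast h2M
  have hn3 : (n : ℝ) ^ 3 ≤ 8 * (2 : ℝ) ^ (3 * M) := by
    have hnle : (n : ℝ) ≤ (2 : ℝ) ^ (M + 1) := by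
      rw [← hcast]; exact_mod_cast h2M'.le
    calc (n : ℝ) ^ 3 ≤ ((2 : ℝ) ^ (M + 1)) ^ 3 := pow_le_pow_left₀ hn0.le hnle 3
      _ = 8 * (2 : ℝ) ^ (3 * M) := by
        rw [← pow_mul, show (M + 1) * 3 = 3 * M + 3 by ring, pow_add]; norm_num; ring
  have hinv : (8 * (2 : ℝ) ^ (3 * M))⁻¹ ≤ ((n : ℝ) ^ 3)⁻¹ :=
    inv_anti₀ (by positivity) hn3
  have hTa : 64 * C' ^ 2 * a M ≤ ∑ m ∈ Finset.Icc 1 M, a m :=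
    (le_div_iff₀ (ha M)).mp (hM₀ M hMM₀)
  have hBinvnn : 0 ≤ b ((2 : ℝ) ^ M) ^ (2 * d) * (8 * (2 : ℝ) ^ (3 * M))⁻¹ :=
    mul_nonneg (hBnn _) (by positivity)
  have hsq : C' ^ 2 ≤ ((b n * (n : ℝ) ^ (-(1 / β))) ^ d * Real.sqrt (G n)) ^ 2 := by
    rw [hsq_eq]
    calc C' ^ 2
        = b ((2 : ℝ) ^ M) ^ (2 * d) * (8 * (2 : ℝ) ^ (3 * M))⁻¹ * ((64 * C' ^ 2 * a M) / 8) := by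
          have hBne : b ((2 : ℝ) ^ M) ^ (2 * d) ≠ 0 := (pow_pos (hb2 M) _).ne'
          simp only [ha_def]
          field_simp [hBne]
          ring
      _ ≤ b ((2 : ℝ) ^ M) ^ (2 * d) * (8 * (2 : ℝ) ^ (3 * M))⁻¹
          * ((∑ m ∈ Finset.Icc 1 M, a m) / 8) :=
          mul_le_mul_of_nonneg_left ((div_le_div_iff_of_pos_right (by norm_num)).mpr hTa) hBinvnn
      _ ≤ b ((2 : ℝ) ^ M) ^ (2 * d) * (8 * (2 : ℝ) ^ (3 * M))⁻¹ * G (2 ^ M) :=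
          mul_le_mul_of_nonneg_left (hstep2 M) hBinvnn
      _ ≤ b ((2 : ℝ) ^ M) ^ (2 * d) * (8 * (2 : ℝ) ^ (3 * M))⁻¹ * G n :=
          mul_le_mul_of_nonneg_left (hG_mono h2M) hBinvnn
      _ ≤ b n ^ (2 * d) * (((n : ℝ) ^ 3)⁻¹) * G n := by
          apply mul_le_mul_of_nonneg_right _ (hG_nonneg n)
          exact mul_le_mul hbnle hinv (by positivity) (hBnn _)
  have hE : 0 ≤ (b n * (n : ℝ) ^ (-(1 / β))) ^ d * Real.sqrt (G n) := by positivity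
  calc C ≤ C' := hCC'
    _ = Real.sqrt (C' ^ 2) := (Real.sqrt_sq hC'pos.le).symm
    _ ≤ Real.sqrt (((b n * (n : ℝ) ^ (-(1 / β))) ^ d * Real.sqrt (G n)) ^ 2) :=
        Real.sqrt_le_sqrt hsq
    _ = (b n * (n : ℝ) ^ (-(1 / β))) ^ d * Real.sqrt (G n) := Real.sqrt_sq hE

end
end

section
/- Let X be any random walk on ℤ^d started at 0 and X′ an independent copy of X, and set h(n) := ∑_{k=1}^n P(X_k = 0). Then for all integers n, m ≥ 1, h(n)·h(m)·E[I_{n,m}] ≤ E[J_{2n,2m}]. -/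
open MeasureTheory ProbabilityTheory Filter Topology Set

open scoped Classical

set_option linter.unusedSectionVars false
set_option linter.unusedVariables false

noncomputable section

variable {d : ℕ} {Ω : Type*} [MeasurableSpace Ω]

/-- The position at time `n` of the random walk with steps `Y`, started at `0`. -/
def walk (Y : ℕ → Ω → (Fin d → ℤ)) (n : ℕ) (ω : Ω) : Fin d → ℤ :=
  ∑ i ∈ Finset.range n, Y i ω

/-- The range `R_n = |{X_0, …, X_n}|` of the random walk with steps `Y`. -/
def rangeRW (Y : ℕ → Ω → (Fin d → ℤ)) (n : ℕ) (ω : Ω) : ℕ :=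
  ((Finset.range (n + 1)).image fun k => walk Y k ω).card

/-- `I_{n,m} = |{X_0, …, X_n} ∩ {X'_0, …, X'_m}|`, the number of common points of the ranges
of the two walks with steps `Y` and `Y'`. -/
def interRange (Y Y' : ℕ → Ω → (Fin d → ℤ)) (n m : ℕ) (ω : Ω) : ℕ :=
  (((Finset.range (n + 1)).image fun k => walk Y k ω) ∩
    ((Finset.range (m + 1)).image fun k => walk Y' k ω)).card

/-- The discrete intersection local time `J_{n,m} = ∑_{i=0}^n ∑_{j=0}^m 1{X_i = X'_j}`. -/
def interLocalTime (Y Y' : ℕ → Ω → (Fin d → ℤ)) (n m : ℕ) (ω : Ω) : ℝ :=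
  ∑ i ∈ Finset.range (n + 1), ∑ j ∈ Finset.range (m + 1),
    if walk Y i ω = walk Y' j ω then (1 : ℝ) else 0

/-- The truncated Green function `h(n) = ∑_{k=1}^n P(X_k = 0)`. -/
def hFun (P : Measure Ω) (Y : ℕ → Ω → (Fin d → ℤ)) (n : ℕ) : ℝ :=
  ∑ k ∈ Finset.Icc 1 n, (P {ω | walk Y k ω = 0}).toReal

namespace RW

lemma measurable_walk {Y : ℕ → Ω → (Fin d → ℤ)} (hY : ∀ i, Measurable (Y i)) (k : ℕ) :
    Measurable (walk Y k) := by
  unfold walk; exact Finset.measurable_sum _ fun i _ => hY i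

lemma measurableSet_eqF {f g : Ω → (Fin d → ℤ)} (hf : Measurable f) (hg : Measurable g) :
    MeasurableSet {ω | f ω = g ω} := by
  have : {ω | f ω = g ω} = ⋃ y : (Fin d → ℤ), (f ⁻¹' {y} ∩ g ⁻¹' {y}) := by
    ext ω; simp only [Set.mem_setOf_eq, Set.mem_iUnion, Set.mem_inter_iff, Set.mem_preimage,
      Set.mem_singleton_iff]
    exact ⟨fun h => ⟨f ω, rfl, h.symm⟩, fun ⟨y, h1, h2⟩ => h1.trans h2.symm⟩
  rw [this]
  exact MeasurableSet.iUnion fun y =>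
    ((hf (measurableSet_singleton y)).inter (hg (measurableSet_singleton y)))

/-- restrict a configuration to a finset of indices -/
def restr (S : Finset (ℕ ⊕ ℕ)) (f : ℕ ⊕ ℕ → Fin d → ℤ) : ℕ ⊕ ℕ → Fin d → ℤ :=
  fun i => if i ∈ S then f i else 0

@[simp] lemma restr_apply_mem {S : Finset (ℕ ⊕ ℕ)} {f : ℕ ⊕ ℕ → Fin d → ℤ} {i : ℕ ⊕ ℕ}
    (h : i ∈ S) : restr S f i = f i := if_pos h

lemma restr_sum (S : Finset (ℕ ⊕ ℕ)) (f : ℕ ⊕ ℕ → Fin d → ℤ) {u : Finset ℕ}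
    {g : ℕ → ℕ ⊕ ℕ} (h : ∀ i ∈ u, g i ∈ S) :
    ∑ i ∈ u, restr S f (g i) = ∑ i ∈ u, f (g i) :=
  Finset.sum_congr rfl fun i hi => if_pos (h i hi)

lemma indep_restr (P : Measure Ω) [IsProbabilityMeasure P] (Z : ℕ ⊕ ℕ → Ω → (Fin d → ℤ))
    (hmeas : ∀ i, Measurable (Z i))
    (hindep : iIndepFun Z P)
    (S T : Finset (ℕ ⊕ ℕ)) (hST : Disjoint S T)
    (F₁ F₂ : (ℕ ⊕ ℕ → Fin d → ℤ) → Prop) :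
    P ({ω | F₁ (restr S fun i => Z i ω)} ∩ {ω | F₂ (restr T fun i => Z i ω)}) =
      P {ω | F₁ (restr S fun i => Z i ω)} * P {ω | F₂ (restr T fun i => Z i ω)} := by
  have h := hindep.indepFun_finset S T hST hmeas
  set A : Set ((i : S) → Fin d → ℤ) :=
    {v | F₁ (fun i => if h : i ∈ S then v ⟨i, h⟩ else 0)} with hA
  set B : Set ((i : T) → Fin d → ℤ) :=
    {v | F₂ (fun i => if h : i ∈ T then v ⟨i, h⟩ else 0)} with hB
  have hSe : {ω | F₁ (restr S fun i => Z i ω)} = (fun ω (i : S) => Z i ω) ⁻¹' A := by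
    ext ω
    simp only [Set.mem_setOf_eq, Set.mem_preimage, hA]
    have : (fun i => if h : i ∈ S then Z (⟨i, h⟩ : S).1 ω else 0)
        = restr S fun i => Z i ω := by
      funext i; unfold restr; split <;> simp_all
    rw [this]
  have hTe : {ω | F₂ (restr T fun i => Z i ω)} = (fun ω (i : T) => Z i ω) ⁻¹' B := by
    ext ω
    simp only [Set.mem_setOf_eq, Set.mem_preimage, hB]
    have : (fun i => if h : i ∈ T then Z (⟨i, h⟩ : T).1 ω else 0)
        = restr T fun i => Z i ω := by
      funext i; unfold restr; split <;> simp_all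
    rw [this]
  rw [hSe, hTe]
  exact h.measure_inter_preimage_eq_mul A B (Set.to_countable A).measurableSet
    (Set.to_countable B).measurableSet

lemma measure_add_eq_tsum (P : Measure Ω) {V W : Ω → (Fin d → ℤ)}
    (hV : Measurable V) (hW : Measurable W) (z : Fin d → ℤ) :
    P {ω | V ω + W ω = z} = ∑' y : (Fin d → ℤ), P ({ω | V ω = y} ∩ {ω | W ω = z - y}) := by
  have hset : {ω | V ω + W ω = z} = ⋃ y : (Fin d → ℤ), ({ω | V ω = y} ∩ {ω | W ω = z - y}) := by
    ext ω
    simp only [Set.mem_setOf_eq, Set.mem_iUnion, Set.mem_inter_iff]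
    constructor
    · intro h; exact ⟨V ω, rfl, by rw [← h]; abel⟩
    · rintro ⟨y, h1, h2⟩; rw [h1, h2]; abel
  rw [hset]
  refine measure_iUnion ?_ fun y =>
    (hV (measurableSet_singleton y)).inter (hW (measurableSet_singleton _))
  intro y y' hyy'
  refine Set.disjoint_left.2 fun ω hω hω' => hyy' ?_
  exact hω.1.symm.trans hω'.1

lemma law_blockSum (P : Measure Ω) [IsProbabilityMeasure P]
    (Y Y' : ℕ → Ω → (Fin d → ℤ))
    (hmeas : ∀ i, Measurable (Sum.elim Y Y' i))
    (hindep : iIndepFun (Sum.elim Y Y') P)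
    (hident : ∀ i, IdentDistrib (Sum.elim Y Y' i) (Y 0) P P)
    (S : Finset (ℕ ⊕ ℕ)) (z : Fin d → ℤ) :
    P {ω | ∑ i ∈ S, Sum.elim Y Y' i ω = z} = P {ω | walk Y S.card ω = z} := by
  classical
  set Z := Sum.elim Y Y' with hZ
  have hY : ∀ i, Measurable (Y i) := fun i => hmeas (Sum.inl i)
  induction S using Finset.induction_on generalizing z with
  | empty =>
      simp only [Finset.sum_empty, Finset.card_empty]
      have : walk Y 0 = fun _ : Ω => (0 : Fin d → ℤ) := by
        funext ω; simp [walk]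
      rw [this]
  | @insert a s ha ih =>
      simp only [Finset.sum_insert ha, Finset.card_insert_of_notMem ha]
      set c := s.card with hc
      -- LHS decomposition
      have hmeasS : Measurable (fun ω => ∑ i ∈ s, Z i ω) :=
        Finset.measurable_sum _ fun i _ => hmeas i
      rw [measure_add_eq_tsum P (hmeas a) hmeasS z]
      -- RHS decomposition
      have hwsucc : {ω | walk Y (c + 1) ω = z} = {ω | Y c ω + walk Y c ω = z} := by
        ext ω; simp only [Set.mem_setOf_eq, walk, Finset.sum_range_succ]
        constructor <;> intro h <;> rw [← h] <;> abel
      rw [hwsucc, measure_add_eq_tsum P (hY c) (measurable_walk hY c) z]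
      congr 1
      funext y
      -- LHS term: independence
      have hL : P ({ω | Z a ω = y} ∩ {ω | ∑ i ∈ s, Z i ω = z - y})
          = P {ω | Z a ω = y} * P {ω | ∑ i ∈ s, Z i ω = z - y} := by
        have := indep_restr P Z hmeas hindep {a} s
          (Finset.disjoint_singleton_left.2 ha)
          (fun f => f a = y) (fun f => ∑ i ∈ s, f i = z - y)
        have e1 : {ω | restr {a} (fun i => Z i ω) a = y} = {ω | Z a ω = y} := by
          ext ω; simp [restr]
        have e2 : {ω | ∑ i ∈ s, restr s (fun j => Z j ω) i = z - y}
            = {ω | ∑ i ∈ s, Z i ω = z - y} := by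
          ext ω
          simp only [Set.mem_setOf_eq]
          have : ∑ i ∈ s, restr s (fun j => Z j ω) i = ∑ i ∈ s, Z i ω :=
            Finset.sum_congr rfl fun i hi => restr_apply_mem hi
          rw [this]
        rw [e1, e2] at this
        exact this
      -- RHS term: independence
      have hR : P ({ω | Y c ω = y} ∩ {ω | walk Y c ω = z - y})
          = P {ω | Y c ω = y} * P {ω | walk Y c ω = z - y} := by
        have := indep_restr P Z hmeas hindep {Sum.inl c} ((Finset.range c).image Sum.inl)
          (by simp) (fun f => f (Sum.inl c) = y)
          (fun f => ∑ i ∈ Finset.range c, f (Sum.inl i) = z - y)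
        have e1 : {ω | restr {Sum.inl c} (fun i => Z i ω) (Sum.inl c) = y}
            = {ω | Y c ω = y} := by
          ext ω; simp [restr, hZ]
        have e2 : {ω | ∑ i ∈ Finset.range c,
              restr ((Finset.range c).image Sum.inl) (fun j => Z j ω) (Sum.inl i) = z - y}
            = {ω | walk Y c ω = z - y} := by
          ext ω
          simp only [Set.mem_setOf_eq]
          have : ∑ i ∈ Finset.range c,
              restr ((Finset.range c).image Sum.inl) (fun j => Z j ω) (Sum.inl i)
              = walk Y c ω := by
            rw [walk]
            exact Finset.sum_congr rfl fun i hi => by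
              rw [restr_apply_mem (Finset.mem_image_of_mem _ hi)]; rfl
          rw [this]
        rw [e1, e2] at this
        exact this
      rw [hL, hR]
      congr 1
      · -- P {Z a = y} = P {Y c = y}
        have h1 := (hident a).measure_mem_eq (s := {y}) (measurableSet_singleton y)
        have h2 := (hident (Sum.inl c)).measure_mem_eq (s := {y}) (measurableSet_singleton y)
        exact h1.trans h2.symm
      · exact ih (z - y)

/-- the event that `s` and `t` are the first hitting times of the common value
`X_s = X'_t` by the two walks. -/
def Est (Y Y' : ℕ → Ω → (Fin d → ℤ)) (s t : ℕ) : Set Ω :=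
  {ω | walk Y s ω = walk Y' t ω ∧ (∀ r < s, walk Y r ω ≠ walk Y s ω) ∧
    (∀ r < t, walk Y' r ω ≠ walk Y' t ω)}

/-- the event that the walk returns at time `s+k` to its position at time `s`. -/
def Bset (Y : ℕ → Ω → (Fin d → ℤ)) (s k : ℕ) : Set Ω :=
  {ω | walk Y (s + k) ω = walk Y s ω}

lemma Bset_zero (Y : ℕ → Ω → (Fin d → ℤ)) (s : ℕ) : Bset Y s 0 = Set.univ := by
  ext ω; simp [Bset]

lemma restr_walk (Z : ℕ ⊕ ℕ → Ω → (Fin d → ℤ)) (S : Finset (ℕ ⊕ ℕ)) (e : ℕ → ℕ ⊕ ℕ)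
    (W : ℕ → Ω → (Fin d → ℤ)) (hZW : ∀ i, Z (e i) = W i) (r : ℕ)
    (h : ∀ i < r, e i ∈ S) (ω : Ω) :
    ∑ i ∈ Finset.range r, restr S (fun j => Z j ω) (e i) = walk W r ω := by
  rw [walk]
  exact Finset.sum_congr rfl fun i hi => by
    rw [restr_apply_mem (h i (Finset.mem_range.1 hi)), hZW]

/-- abstract form of the event `Est ∩ Bset` as a predicate on configurations. -/
def EstBF (s t k : ℕ) (f : ℕ ⊕ ℕ → Fin d → ℤ) : Prop :=
  (∑ i ∈ Finset.range s, f (Sum.inl i) = ∑ i ∈ Finset.range t, f (Sum.inr i))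
    ∧ (∀ r < s, ∑ i ∈ Finset.range r, f (Sum.inl i) ≠ ∑ i ∈ Finset.range s, f (Sum.inl i))
    ∧ (∀ r < t, ∑ i ∈ Finset.range r, f (Sum.inr i) ≠ ∑ i ∈ Finset.range t, f (Sum.inr i))
    ∧ (∑ i ∈ Finset.range (s + k), f (Sum.inl i) = ∑ i ∈ Finset.range s, f (Sum.inl i))

/-- abstract form of the event `Bset` as a predicate on configurations. -/
def IcoF (t l : ℕ) (e : ℕ → ℕ ⊕ ℕ) (f : ℕ ⊕ ℕ → Fin d → ℤ) : Prop :=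
  ∑ i ∈ Finset.Ico t (t + l), f (e i) = 0

lemma Est_inter_eq (Y Y' : ℕ → Ω → (Fin d → ℤ)) (s t k : ℕ) (S : Finset (ℕ ⊕ ℕ))
    (hS1 : ∀ i < s + k, Sum.inl i ∈ S) (hS2 : ∀ j < t, Sum.inr j ∈ S) :
    {ω | EstBF s t k (restr S fun j => Sum.elim Y Y' j ω)}
      = Est Y Y' s t ∩ Bset Y s k := by
  ext ω
  unfold EstBF
  have trL : ∀ r ≤ s + k, ∑ i ∈ Finset.range r,
      restr S (fun j => Sum.elim Y Y' j ω) (Sum.inl i) = walk Y r ω := fun r hr =>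
    restr_walk _ S Sum.inl Y (fun i => rfl) r (fun i hi => hS1 i (lt_of_lt_of_le hi hr)) ω
  have trR : ∀ r ≤ t, ∑ i ∈ Finset.range r,
      restr S (fun j => Sum.elim Y Y' j ω) (Sum.inr i) = walk Y' r ω := fun r hr =>
    restr_walk _ S Sum.inr Y' (fun i => rfl) r (fun i hi => hS2 i (lt_of_lt_of_le hi hr)) ω
  simp only [Set.mem_setOf_eq, Set.mem_inter_iff, Est, Bset]
  constructor
  · rintro ⟨h1, h2, h3, h4⟩
    rw [trL s (by omega), trR t le_rfl] at h1
    rw [trL (s + k) le_rfl, trL s (by omega)] at h4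
    refine ⟨⟨h1, fun r hr => ?_, fun r hr => ?_⟩, h4⟩
    · have := h2 r hr; rwa [trL r (by omega), trL s (by omega)] at this
    · have := h3 r hr; rwa [trR r (by omega), trR t le_rfl] at this
  · rintro ⟨⟨h1, h2, h3⟩, h4⟩
    refine ⟨?_, fun r hr => ?_, fun r hr => ?_, ?_⟩
    · rw [trL s (by omega), trR t le_rfl]; exact h1
    · rw [trL r (by omega), trL s (by omega)]; exact h2 r hr
    · rw [trR r (by omega), trR t le_rfl]; exact h3 r hr
    · rw [trL (s + k) le_rfl, trL s (by omega)]; exact h4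

lemma Ico_event_eq (Z : ℕ ⊕ ℕ → Ω → (Fin d → ℤ)) (e : ℕ → ℕ ⊕ ℕ)
    (W : ℕ → Ω → (Fin d → ℤ)) (hZW : ∀ i, Z (e i) = W i) (t l : ℕ) (T : Finset (ℕ ⊕ ℕ))
    (hT : ∀ i, t ≤ i → i < t + l → e i ∈ T) :
    {ω | IcoF t l e (restr T fun j => Z j ω)} = Bset W t l := by
  ext ω
  unfold IcoF
  simp only [Set.mem_setOf_eq, Bset]
  rw [Finset.sum_congr rfl (fun i hi => by
    rw [restr_apply_mem (hT i (Finset.mem_Ico.1 hi).1 (Finset.mem_Ico.1 hi).2), hZW])]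
  rw [Finset.sum_Ico_eq_sub (fun i => W i ω) (Nat.le_add_right t l)]
  exact sub_eq_zero.trans Iff.rfl

lemma law_Bset (P : Measure Ω) [IsProbabilityMeasure P]
    (Y Y' : ℕ → Ω → (Fin d → ℤ))
    (hmeas : ∀ i, Measurable (Sum.elim Y Y' i))
    (hindep : iIndepFun (Sum.elim Y Y') P)
    (hident : ∀ i, IdentDistrib (Sum.elim Y Y' i) (Y 0) P P)
    (e : ℕ → ℕ ⊕ ℕ) (he : Function.Injective e)
    (W : ℕ → Ω → (Fin d → ℤ)) (hZW : ∀ i, Sum.elim Y Y' (e i) = W i) (t l : ℕ) :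
    P (Bset W t l) = P {ω | walk Y l ω = 0} := by
  have h := law_blockSum P Y Y' hmeas hindep hident ((Finset.Ico t (t + l)).image e) 0
  rw [Finset.card_image_of_injective _ he, Nat.card_Ico] at h
  have hc : t + l - t = l := by omega
  rw [hc] at h
  rw [← h]
  congr 1
  ext ω
  simp only [Set.mem_setOf_eq]
  rw [Finset.sum_image (fun x _ y _ hxy => he hxy)]
  rw [Finset.sum_congr rfl (fun i _ => by rw [hZW])]
  rw [Finset.sum_Ico_eq_sub (fun i => W i ω) (Nat.le_add_right t l)]
  exact Iff.rfl.trans sub_eq_zero.symm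

lemma measure_triple (P : Measure Ω) [IsProbabilityMeasure P]
    (Y Y' : ℕ → Ω → (Fin d → ℤ))
    (hmeas : ∀ i, Measurable (Sum.elim Y Y' i))
    (hindep : iIndepFun (Sum.elim Y Y') P)
    (hident : ∀ i, IdentDistrib (Sum.elim Y Y' i) (Y 0) P P)
    (s t k l : ℕ) :
    P (Est Y Y' s t ∩ Bset Y s k ∩ Bset Y' t l)
      = P (Est Y Y' s t) * P {ω | walk Y k ω = 0} * P {ω | walk Y l ω = 0} := by
  set Z := Sum.elim Y Y' with hZ
  -- Step 1: split off the third event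
  have h1 : P (Est Y Y' s t ∩ Bset Y s k ∩ Bset Y' t l)
      = P (Est Y Y' s t ∩ Bset Y s k) * P (Bset Y' t l) := by
    set S₁ : Finset (ℕ ⊕ ℕ) :=
      ((Finset.range (s + k)).image Sum.inl) ∪ ((Finset.range t).image Sum.inr) with hS₁
    set T₁ : Finset (ℕ ⊕ ℕ) := (Finset.Ico t (t + l)).image Sum.inr with hT₁
    have hd : Disjoint S₁ T₁ := by
      rw [Finset.disjoint_left]
      rintro x hx hxT
      simp only [hS₁, hT₁, Finset.mem_union, Finset.mem_image, Finset.mem_range,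
        Finset.mem_Ico] at hx hxT
      obtain ⟨j, ⟨hj1, hj2⟩, rfl⟩ := hxT
      rcases hx with ⟨i, hi, h⟩ | ⟨i, hi, h⟩
      · exact Sum.inl_ne_inr h
      · injection h with h'; omega
    have key := indep_restr P Z hmeas hindep S₁ T₁ hd (EstBF s t k) (IcoF t l Sum.inr)
    rw [Est_inter_eq Y Y' s t k S₁
        (fun i hi => Finset.mem_union_left _ (Finset.mem_image_of_mem _ (Finset.mem_range.2 hi)))
        (fun j hj => Finset.mem_union_right _ (Finset.mem_image_of_mem _ (Finset.mem_range.2 hj))),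
      Ico_event_eq Z Sum.inr Y' (fun i => rfl) t l T₁
        (fun i hi1 hi2 => Finset.mem_image_of_mem _ (Finset.mem_Ico.2 ⟨hi1, hi2⟩))] at key
    exact key
  -- Step 2: split the first two events
  have h2 : P (Est Y Y' s t ∩ Bset Y s k) = P (Est Y Y' s t) * P (Bset Y s k) := by
    set S₂ : Finset (ℕ ⊕ ℕ) :=
      ((Finset.range s).image Sum.inl) ∪ ((Finset.range t).image Sum.inr) with hS₂
    set T₂ : Finset (ℕ ⊕ ℕ) := (Finset.Ico s (s + k)).image Sum.inl with hT₂
    have hd : Disjoint S₂ T₂ := by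
      rw [Finset.disjoint_left]
      rintro x hx hxT
      simp only [hS₂, hT₂, Finset.mem_union, Finset.mem_image, Finset.mem_range,
        Finset.mem_Ico] at hx hxT
      obtain ⟨j, ⟨hj1, hj2⟩, rfl⟩ := hxT
      rcases hx with ⟨i, hi, h⟩ | ⟨i, hi, h⟩
      · injection h with h'; omega
      · exact Sum.inr_ne_inl h
    have key := indep_restr P Z hmeas hindep S₂ T₂ hd (EstBF s t 0) (IcoF s k Sum.inl)
    rw [Est_inter_eq Y Y' s t 0 S₂
        (fun i hi => Finset.mem_union_left _
          (Finset.mem_image_of_mem _ (Finset.mem_range.2 (by omega))))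
        (fun j hj => Finset.mem_union_right _ (Finset.mem_image_of_mem _ (Finset.mem_range.2 hj))),
      Ico_event_eq Z Sum.inl Y (fun i => rfl) s k T₂
        (fun i hi1 hi2 => Finset.mem_image_of_mem _ (Finset.mem_Ico.2 ⟨hi1, hi2⟩)),
      Bset_zero, Set.inter_univ] at key
    exact key
  rw [h1, h2,
    law_Bset P Y Y' hmeas hindep hident Sum.inl Sum.inl_injective Y (fun i => rfl) s k,
    law_Bset P Y Y' hmeas hindep hident Sum.inr Sum.inr_injective Y' (fun i => rfl) t l]

/-- Claim A: the number of common points equals the number of "first-hitting pairs". -/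
lemma interRange_eq_card (Y Y' : ℕ → Ω → (Fin d → ℤ)) (n m : ℕ) (ω : Ω) :
    interRange Y Y' n m ω = (((Finset.range (n + 1)) ×ˢ (Finset.range (m + 1))).filter
      (fun p => ω ∈ Est Y Y' p.1 p.2)).card := by
  rw [interRange]
  refine (Finset.card_bij (fun p _ => walk Y p.1 ω) ?_ ?_ ?_).symm
  · rintro ⟨s, t⟩ hp
    rw [Finset.mem_filter, Finset.mem_product, Finset.mem_range, Finset.mem_range] at hp
    obtain ⟨⟨hs, ht⟩, h1, _, _⟩ := hp
    refine Finset.mem_inter.2 ⟨Finset.mem_image.2 ⟨s, Finset.mem_range.2 hs, rfl⟩,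
      Finset.mem_image.2 ⟨t, Finset.mem_range.2 ht, h1.symm⟩⟩
  · rintro ⟨s, t⟩ hp ⟨s', t'⟩ hp' hw
    replace hw : walk Y s ω = walk Y s' ω := hw
    rw [Finset.mem_filter, Finset.mem_product] at hp hp'
    obtain ⟨-, h1, h2, h3⟩ := hp
    obtain ⟨-, h1', h2', h3'⟩ := hp'
    dsimp only at h1 h2 h3 h1' h2' h3'
    have hss : s = s' := by
      rcases lt_trichotomy s s' with h | h | h
      · exact absurd hw (h2' s h)
      · exact h
      · exact absurd hw.symm (h2 s' h)
    subst hss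
    have htt : t = t' := by
      have hww : walk Y' t ω = walk Y' t' ω := by rw [← h1, ← h1', hw]
      rcases lt_trichotomy t t' with h | h | h
      · exact absurd hww (h3' t h)
      · exact h
      · exact absurd hww.symm (h3 t' h)
    subst htt
    rfl
  · intro z hz
    rw [Finset.mem_inter, Finset.mem_image, Finset.mem_image] at hz
    obtain ⟨⟨s₀, hs₀, hzs⟩, ⟨t₀, ht₀, hzt⟩⟩ := hz
    rw [Finset.mem_range] at hs₀ ht₀
    have hex : ∃ s, walk Y s ω = z := ⟨s₀, hzs⟩
    have hex' : ∃ t, walk Y' t ω = z := ⟨t₀, hzt⟩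
    set s := Nat.find hex with hs
    set t := Nat.find hex' with ht
    have hws : walk Y s ω = z := Nat.find_spec hex
    have hwt : walk Y' t ω = z := Nat.find_spec hex'
    refine ⟨(s, t), ?_, hws⟩
    rw [Finset.mem_filter, Finset.mem_product, Finset.mem_range, Finset.mem_range]
    refine ⟨⟨lt_of_le_of_lt (Nat.find_min' hex hzs) hs₀,
      lt_of_le_of_lt (Nat.find_min' hex' hzt) ht₀⟩, ?_, ?_, ?_⟩
    · rw [hws, hwt]
    · intro r hr; rw [hws]; exact Nat.find_min hex hr
    · intro r hr; rw [hwt]; exact Nat.find_min hex' hr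

/-- Claim C: the pointwise bound of the first-hitting decomposition by the local time. -/
lemma pointwise_le (Y Y' : ℕ → Ω → (Fin d → ℤ)) (n m : ℕ) (ω : Ω) :
    ∑ p ∈ (Finset.range (n + 1)) ×ˢ (Finset.range (m + 1)),
      ∑ q ∈ (Finset.Icc 1 n) ×ˢ (Finset.Icc 1 m),
        (if ω ∈ Est Y Y' p.1 p.2 ∩ Bset Y p.1 q.1 ∩ Bset Y' p.2 q.2 then (1 : ℝ) else 0)
      ≤ interLocalTime Y Y' (2 * n) (2 * m) ω := by
  have hL : ∑ p ∈ (Finset.range (n + 1)) ×ˢ (Finset.range (m + 1)),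
      ∑ q ∈ (Finset.Icc 1 n) ×ˢ (Finset.Icc 1 m),
        (if ω ∈ Est Y Y' p.1 p.2 ∩ Bset Y p.1 q.1 ∩ Bset Y' p.2 q.2 then (1 : ℝ) else 0)
      = ((((Finset.range (n + 1)) ×ˢ (Finset.range (m + 1))) ×ˢ
          ((Finset.Icc 1 n) ×ˢ (Finset.Icc 1 m))).filter
        (fun pq => ω ∈ Est Y Y' pq.1.1 pq.1.2 ∩ Bset Y pq.1.1 pq.2.1 ∩
          Bset Y' pq.1.2 pq.2.2)).card := by
    rw [Finset.card_filter]
    push_cast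
    exact (Finset.sum_product ((Finset.range (n + 1)) ×ˢ (Finset.range (m + 1)))
      ((Finset.Icc 1 n) ×ˢ (Finset.Icc 1 m))
      (fun pq => if ω ∈ Est Y Y' pq.1.1 pq.1.2 ∩ Bset Y pq.1.1 pq.2.1 ∩
        Bset Y' pq.1.2 pq.2.2 then (1 : ℝ) else 0)).symm
  have hR : interLocalTime Y Y' (2 * n) (2 * m) ω
      = (((Finset.range (2 * n + 1)) ×ˢ (Finset.range (2 * m + 1))).filter
        (fun ij => walk Y ij.1 ω = walk Y' ij.2 ω)).card := by
    rw [interLocalTime, Finset.card_filter]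
    push_cast
    exact (Finset.sum_product (Finset.range (2 * n + 1)) (Finset.range (2 * m + 1))
      (fun ij => if walk Y ij.1 ω = walk Y' ij.2 ω then (1 : ℝ) else 0)).symm
  rw [hL, hR]
  have hcard : ((((Finset.range (n + 1)) ×ˢ (Finset.range (m + 1))) ×ˢ
          ((Finset.Icc 1 n) ×ˢ (Finset.Icc 1 m))).filter
        (fun pq => ω ∈ Est Y Y' pq.1.1 pq.1.2 ∩ Bset Y pq.1.1 pq.2.1 ∩
          Bset Y' pq.1.2 pq.2.2)).card
      ≤ (((Finset.range (2 * n + 1)) ×ˢ (Finset.range (2 * m + 1))).filter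
        (fun ij => walk Y ij.1 ω = walk Y' ij.2 ω)).card := by
    refine Finset.card_le_card_of_injOn
      (fun pq => (pq.1.1 + pq.2.1, pq.1.2 + pq.2.2)) ?_ ?_
    · rintro ⟨⟨s, t⟩, k, l⟩ hpq
      rw [Finset.mem_coe, Finset.mem_filter, Finset.mem_product, Finset.mem_product, Finset.mem_product,
        Finset.mem_range, Finset.mem_range, Finset.mem_Icc, Finset.mem_Icc] at hpq
      obtain ⟨⟨⟨hs, ht⟩, ⟨-, hk⟩, -, hl⟩, hE⟩ := hpq
      obtain ⟨⟨⟨hE1, -, -⟩, hB⟩, hC⟩ := hE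
      dsimp only at hs ht hk hl hE1 hB hC
      rw [Finset.mem_coe, Finset.mem_filter, Finset.mem_product, Finset.mem_range, Finset.mem_range]
      dsimp only
      refine ⟨⟨by omega, by omega⟩, ?_⟩
      show walk Y (s + k) ω = walk Y' (t + l) ω
      rw [hB, hC]
      exact hE1
    · rintro ⟨⟨s, t⟩, k, l⟩ hpq ⟨⟨s', t'⟩, k', l'⟩ hpq' heq
      simp only [Finset.coe_filter, Set.mem_setOf_eq, Finset.mem_product, Finset.mem_range,
        Finset.mem_Icc] at hpq hpq'
      obtain ⟨-, ⟨⟨hE1, hE2, hE3⟩, hB⟩, hC⟩ := hpq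
      obtain ⟨-, ⟨⟨hE1', hE2', hE3'⟩, hB'⟩, hC'⟩ := hpq'
      have h1 : s + k = s' + k' := congrArg Prod.fst heq
      have h2 : t + l = t' + l' := congrArg Prod.snd heq
      have hwss : walk Y s ω = walk Y s' ω := by
        rw [← hB, ← hB']
        show walk Y (s + k) ω = walk Y (s' + k') ω
        rw [h1]
      have hss : s = s' := by
        rcases lt_trichotomy s s' with h | h | h
        · exact absurd hwss (hE2' s h)
        · exact h
        · exact absurd hwss.symm (hE2 s' h)
      have hwtt : walk Y' t ω = walk Y' t' ω := by
        rw [← hC, ← hC']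
        show walk Y' (t + l) ω = walk Y' (t' + l') ω
        rw [h2]
      have htt : t = t' := by
        rcases lt_trichotomy t t' with h | h | h
        · exact absurd hwtt (hE3' t h)
        · exact h
        · exact absurd hwtt.symm (hE3 t' h)
      simp only [Prod.mk.injEq]
      omega
  exact_mod_cast hcard

lemma measurableSet_Est {Y Y' : ℕ → Ω → (Fin d → ℤ)} (hY : ∀ i, Measurable (Y i))
    (hY' : ∀ i, Measurable (Y' i)) (s t : ℕ) : MeasurableSet (Est Y Y' s t) := by
  have h1 : Est Y Y' s t = {ω | walk Y s ω = walk Y' t ω}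
      ∩ ((⋂ r ∈ Finset.range s, {ω | walk Y r ω = walk Y s ω}ᶜ)
        ∩ (⋂ r ∈ Finset.range t, {ω | walk Y' r ω = walk Y' t ω}ᶜ)) := by
    ext ω
    simp only [Est, Set.mem_setOf_eq, Set.mem_inter_iff, Set.mem_iInter, Set.mem_compl_iff,
      Finset.mem_range]
  rw [h1]
  refine (measurableSet_eqF (measurable_walk hY s) (measurable_walk hY' t)).inter
    (MeasurableSet.inter ?_ ?_)
  · exact MeasurableSet.biInter (Set.to_countable _) fun r _ =>
      (measurableSet_eqF (measurable_walk hY r) (measurable_walk hY s)).compl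
  · exact MeasurableSet.biInter (Set.to_countable _) fun r _ =>
      (measurableSet_eqF (measurable_walk hY' r) (measurable_walk hY' t)).compl

lemma ite_eq_indicator {E : Set Ω} {ω : Ω} [Decidable (ω ∈ E)] :
    (if ω ∈ E then (1 : ℝ) else 0) = E.indicator (fun _ => (1 : ℝ)) ω := by
  by_cases h : ω ∈ E <;> simp [h]

lemma integrable_ind (P : Measure Ω) [IsProbabilityMeasure P] {E : Set Ω}
    (hE : MeasurableSet E) : Integrable (E.indicator (fun _ => (1 : ℝ))) P :=
  (integrable_const (1 : ℝ)).indicator hE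

lemma integral_sum_indicator {ι : Type*} (P : Measure Ω) [IsProbabilityMeasure P]
    (u : Finset ι) (E : ι → Set Ω) (hE : ∀ i ∈ u, MeasurableSet (E i)) :
    ∫ ω, ∑ i ∈ u, (E i).indicator (fun _ => (1 : ℝ)) ω ∂P = ∑ i ∈ u, (P (E i)).toReal := by
  rw [integral_finset_sum u (fun i hi => integrable_ind P (hE i hi))]
  refine Finset.sum_congr rfl fun i hi => ?_
  rw [integral_indicator_const (1 : ℝ) (hE i hi)]
  simp [Measure.real]

end RW

/-- If `X`, `X'` are two independent copies of a random walk on `ℤ^d` started at `0`, then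
for all `n, m ≥ 1`, `h(n) h(m) E[I_{n,m}] ≤ E[J_{2n,2m}]`. -/
theorem hFun_mul_hFun_mul_integral_interRange_le
    {d : ℕ} (hd : 1 ≤ d) {Ω : Type} [MeasurableSpace Ω] (P : Measure Ω)
    [IsProbabilityMeasure P]
    (Y Y' : ℕ → Ω → (Fin d → ℤ))
    (hmeas : ∀ i : ℕ ⊕ ℕ, Measurable (Sum.elim Y Y' i))
    (hindep : iIndepFun (Sum.elim Y Y') P)
    (hident : ∀ i : ℕ ⊕ ℕ, IdentDistrib (Sum.elim Y Y' i) (Y 0) P P)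
    (n m : ℕ) (hn : 1 ≤ n) (hm : 1 ≤ m) :
    hFun P Y n * hFun P Y m * ∫ ω, (interRange Y Y' n m ω : ℝ) ∂P
      ≤ ∫ ω, interLocalTime Y Y' (2 * n) (2 * m) ω ∂P := by
  classical
  have hY : ∀ i, Measurable (Y i) := fun i => hmeas (Sum.inl i)
  have hY' : ∀ i, Measurable (Y' i) := fun i => hmeas (Sum.inr i)
  have hEst : ∀ s t, MeasurableSet (RW.Est Y Y' s t) := RW.measurableSet_Est hY hY'
  have hB : ∀ s k, MeasurableSet (RW.Bset Y s k) := fun s k =>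
    RW.measurableSet_eqF (RW.measurable_walk hY _) (RW.measurable_walk hY _)
  have hB' : ∀ t l, MeasurableSet (RW.Bset Y' t l) := fun t l =>
    RW.measurableSet_eqF (RW.measurable_walk hY' _) (RW.measurable_walk hY' _)
  set A : Finset (ℕ × ℕ) := (Finset.range (n + 1)) ×ˢ (Finset.range (m + 1)) with hA
  set B : Finset (ℕ × ℕ) := (Finset.Icc 1 n) ×ˢ (Finset.Icc 1 m) with hBdef
  -- Step 1: compute ∫ interRange
  have hI : ∫ ω, (interRange Y Y' n m ω : ℝ) ∂P
      = ∑ p ∈ A, (P (RW.Est Y Y' p.1 p.2)).toReal := by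
    have h1 : (fun ω => (interRange Y Y' n m ω : ℝ))
        = fun ω => ∑ p ∈ A, (RW.Est Y Y' p.1 p.2).indicator (fun _ => (1 : ℝ)) ω := by
      funext ω
      rw [RW.interRange_eq_card Y Y' n m ω, Finset.card_filter]
      push_cast
      exact Finset.sum_congr rfl fun p _ => RW.ite_eq_indicator
    rw [h1, RW.integral_sum_indicator P A _ (fun p _ => hEst p.1 p.2)]
  -- Step 2: key identity per p
  have hkey : ∀ p ∈ A, hFun P Y n * hFun P Y m * (P (RW.Est Y Y' p.1 p.2)).toReal
      = ∑ q ∈ B, (P (RW.Est Y Y' p.1 p.2 ∩ RW.Bset Y p.1 q.1 ∩ RW.Bset Y' p.2 q.2)).toReal := by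
    rintro ⟨s, t⟩ -
    rw [hBdef, Finset.sum_product]
    have hterm : ∀ k l, (P (RW.Est Y Y' s t ∩ RW.Bset Y s k ∩ RW.Bset Y' t l)).toReal
        = (P {ω | walk Y k ω = 0}).toReal *
          ((P {ω | walk Y l ω = 0}).toReal * (P (RW.Est Y Y' s t)).toReal) := by
      intro k l
      rw [RW.measure_triple P Y Y' hmeas hindep hident s t k l, ENNReal.toReal_mul,
        ENNReal.toReal_mul]
      ring
    calc hFun P Y n * hFun P Y m * (P (RW.Est Y Y' s t)).toReal
        = ∑ k ∈ Finset.Icc 1 n, (P {ω | walk Y k ω = 0}).toReal *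
            ((∑ l ∈ Finset.Icc 1 m, (P {ω | walk Y l ω = 0}).toReal)
              * (P (RW.Est Y Y' s t)).toReal) := by
          simp only [hFun]
          rw [Finset.sum_mul, Finset.sum_mul]
          exact Finset.sum_congr rfl fun k _ => by ring
      _ = ∑ k ∈ Finset.Icc 1 n, ∑ l ∈ Finset.Icc 1 m,
            (P (RW.Est Y Y' s t ∩ RW.Bset Y ((s, t).1) k ∩ RW.Bset Y' ((s, t).2) l)).toReal := by
          refine Finset.sum_congr rfl fun k _ => ?_
          rw [Finset.sum_mul, Finset.mul_sum]
          exact (Finset.sum_congr rfl fun l _ => (hterm k l).symm)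
  -- Step 3: middle sum as integral
  have hMid : ∑ p ∈ A, ∑ q ∈ B,
      (P (RW.Est Y Y' p.1 p.2 ∩ RW.Bset Y p.1 q.1 ∩ RW.Bset Y' p.2 q.2)).toReal
      = ∫ ω, ∑ p ∈ A, ∑ q ∈ B,
        (if ω ∈ RW.Est Y Y' p.1 p.2 ∩ RW.Bset Y p.1 q.1 ∩ RW.Bset Y' p.2 q.2
          then (1 : ℝ) else 0) ∂P := by
    have hflat : (fun ω : Ω => ∑ p ∈ A, ∑ q ∈ B,
        (if ω ∈ RW.Est Y Y' p.1 p.2 ∩ RW.Bset Y p.1 q.1 ∩ RW.Bset Y' p.2 q.2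
          then (1 : ℝ) else 0))
        = fun ω : Ω => ∑ x ∈ A ×ˢ B,
          (RW.Est Y Y' x.1.1 x.1.2 ∩ RW.Bset Y x.1.1 x.2.1 ∩
            RW.Bset Y' x.1.2 x.2.2).indicator (fun _ => (1 : ℝ)) ω := by
      funext ω
      rw [show (∑ p ∈ A, ∑ q ∈ B,
        (if ω ∈ RW.Est Y Y' p.1 p.2 ∩ RW.Bset Y p.1 q.1 ∩ RW.Bset Y' p.2 q.2
          then (1 : ℝ) else 0)) = ∑ p ∈ A, ∑ q ∈ B,
          (RW.Est Y Y' p.1 p.2 ∩ RW.Bset Y p.1 q.1 ∩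
            RW.Bset Y' p.2 q.2).indicator (fun _ => (1 : ℝ)) ω from
        Finset.sum_congr rfl fun p _ => Finset.sum_congr rfl fun q _ => RW.ite_eq_indicator]
      exact (Finset.sum_product A B (fun x =>
        (RW.Est Y Y' x.1.1 x.1.2 ∩ RW.Bset Y x.1.1 x.2.1 ∩
          RW.Bset Y' x.1.2 x.2.2).indicator (fun _ => (1 : ℝ)) ω)).symm
    have h2 : ∫ ω, ∑ p ∈ A, ∑ q ∈ B,
        (if ω ∈ RW.Est Y Y' p.1 p.2 ∩ RW.Bset Y p.1 q.1 ∩ RW.Bset Y' p.2 q.2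
          then (1 : ℝ) else 0) ∂P
        = ∑ x ∈ A ×ˢ B, (P (RW.Est Y Y' x.1.1 x.1.2 ∩ RW.Bset Y x.1.1 x.2.1 ∩
            RW.Bset Y' x.1.2 x.2.2)).toReal := by
      rw [hflat]
      exact RW.integral_sum_indicator P (A ×ˢ B) _ (fun x _ =>
        ((hEst x.1.1 x.1.2).inter (hB x.1.1 x.2.1)).inter (hB' x.1.2 x.2.2))
    rw [h2]
    exact (Finset.sum_product A B (fun x =>
      (P (RW.Est Y Y' x.1.1 x.1.2 ∩ RW.Bset Y x.1.1 x.2.1 ∩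
        RW.Bset Y' x.1.2 x.2.2)).toReal)).symm
  -- Step 4: integrability and monotonicity
  have hIntF : Integrable (fun ω => ∑ p ∈ A, ∑ q ∈ B,
      (if ω ∈ RW.Est Y Y' p.1 p.2 ∩ RW.Bset Y p.1 q.1 ∩ RW.Bset Y' p.2 q.2
        then (1 : ℝ) else 0)) P := by
    refine integrable_finset_sum A fun p _ => integrable_finset_sum B fun q _ => ?_
    have := RW.integrable_ind P (((hEst p.1 p.2).inter (hB p.1 q.1)).inter (hB' p.2 q.2))
    refine this.congr (Filter.Eventually.of_forall fun ω => ?_)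
    exact RW.ite_eq_indicator.symm
  have hIntJ : Integrable (fun ω => interLocalTime Y Y' (2 * n) (2 * m) ω) P := by
    unfold interLocalTime
    refine integrable_finset_sum _ fun i _ => integrable_finset_sum _ fun j _ => ?_
    have := RW.integrable_ind P (RW.measurableSet_eqF (RW.measurable_walk hY i)
      (RW.measurable_walk hY' j))
    refine this.congr (Filter.Eventually.of_forall fun ω => ?_)
    exact (RW.ite_eq_indicator (E := {ω | walk Y i ω = walk Y' j ω}) (ω := ω)).symm
  calc hFun P Y n * hFun P Y m * ∫ ω, (interRange Y Y' n m ω : ℝ) ∂P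
      = ∑ p ∈ A, ∑ q ∈ B,
        (P (RW.Est Y Y' p.1 p.2 ∩ RW.Bset Y p.1 q.1 ∩ RW.Bset Y' p.2 q.2)).toReal := by
        rw [hI, Finset.mul_sum]
        exact Finset.sum_congr rfl hkey
    _ = ∫ ω, ∑ p ∈ A, ∑ q ∈ B,
        (if ω ∈ RW.Est Y Y' p.1 p.2 ∩ RW.Bset Y p.1 q.1 ∩ RW.Bset Y' p.2 q.2
          then (1 : ℝ) else 0) ∂P := hMid
    _ ≤ ∫ ω, interLocalTime Y Y' (2 * n) (2 * m) ω ∂P :=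
        integral_mono hIntF hIntJ (RW.pointwise_le Y Y' n m)

end
end

section
/- Let X be any random walk on ℤ^d started at 0 and let p ≥ 1 be an integer. Then there is a constant C_p > 0, depending only on p, such that for all n ≥ 1, E[ R_n^{2p} ] ≤ C_p · ( E[R_n] )^{2p}. -/
open MeasureTheory ProbabilityTheory Filter Topology Set

noncomputable section

variable {d : ℕ} {Ω : Type*} [MeasurableSpace Ω]

set_option linter.unusedSectionVars false

namespace MomentAux

/-- extension of a finite tuple by zeros -/
def extz {m : ℕ} (v : Fin m → (Fin d → ℤ)) (t : ℕ) : Fin d → ℤ :=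
  if h : t < m then v ⟨t, h⟩ else 0

/-- partial sums of an extended tuple -/
def wsum {m : ℕ} (v : Fin m → (Fin d → ℤ)) (k : ℕ) : Fin d → ℤ :=
  ∑ t ∈ Finset.range k, extz v t

/-- the set of step-tuples of length m whose walk is at a new site at time m -/
def newSet (d m : ℕ) : Set (Fin m → (Fin d → ℤ)) :=
  {v | ∀ j < m, wsum v m ≠ wsum v j}

/-- the block of steps `Y_s, …, Y_{s+m-1}` -/
def blk (Y : ℕ → Ω → (Fin d → ℤ)) (s m : ℕ) (ω : Ω) : Fin m → (Fin d → ℤ) :=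
  fun t => Y (s + t) ω

lemma walk_add (Y : ℕ → Ω → (Fin d → ℤ)) (s k : ℕ) (ω : Ω) :
    walk Y (s + k) ω = walk Y s ω + ∑ t ∈ Finset.range k, Y (s + t) ω := by
  simpa [walk] using Finset.sum_range_add (fun i => Y i ω) s k

lemma wsum_blk (Y : ℕ → Ω → (Fin d → ℤ)) (s m : ℕ) (ω : Ω) {k : ℕ} (hk : k ≤ m) :
    wsum (blk Y s m ω) k = ∑ t ∈ Finset.range k, Y (s + t) ω := by
  refine Finset.sum_congr rfl fun t ht => ?_
  have htm : t < m := lt_of_lt_of_le (Finset.mem_range.1 ht) hk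
  simp [extz, htm, blk]

lemma mem_blk_newSet_iff (Y : ℕ → Ω → (Fin d → ℤ)) (s m : ℕ) (ω : Ω) :
    blk Y s m ω ∈ newSet d m ↔
      ∀ j, s ≤ j → j < s + m → walk Y (s + m) ω ≠ walk Y j ω := by
  have key : ∀ k, k ≤ m → walk Y (s + k) ω = walk Y s ω + wsum (blk Y s m ω) k := by
    intro k hk
    rw [wsum_blk Y s m ω hk, walk_add]
  constructor
  · intro hv j hsj hjm h
    obtain ⟨j', rfl⟩ := Nat.exists_eq_add_of_le hsj
    have hj'm : j' < m := by omega
    apply hv j' hj'm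
    have h1 := key m le_rfl
    have h2 := key j' hj'm.le
    rw [h1, h2] at h
    exact add_left_cancel h
  · intro hw j hjm h
    apply hw (s + j) (Nat.le_add_right _ _) (by omega)
    rw [key m le_rfl, key j hjm.le, h]

/-- the event that the walk is at a new site at time `k` -/
def nevt (Y : ℕ → Ω → (Fin d → ℤ)) (k : ℕ) : Set Ω := blk Y 0 k ⁻¹' newSet d k

lemma mem_nevt_iff (Y : ℕ → Ω → (Fin d → ℤ)) (k : ℕ) (ω : Ω) :
    ω ∈ nevt Y k ↔ ∀ j < k, walk Y k ω ≠ walk Y j ω := by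
  have h := mem_blk_newSet_iff Y 0 k ω
  rw [zero_add] at h
  rw [nevt, Set.mem_preimage, h]
  exact ⟨fun h j hj => h j (Nat.zero_le _) hj, fun h j _ hj => h j hj⟩

lemma rangeRW_eq_sum (Y : ℕ → Ω → (Fin d → ℤ)) (n : ℕ) (ω : Ω) :
    rangeRW Y n ω = ∑ k ∈ Finset.range (n + 1), (nevt Y k).indicator 1 ω := by
  classical
  induction n with
  | zero =>
    have h0 : ω ∈ nevt Y 0 := (mem_nevt_iff Y 0 ω).2 (by omega)
    rw [rangeRW]
    simp [Finset.range_one, Set.indicator_of_mem h0]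
  | succ n ih =>
    rw [Finset.sum_range_succ, ← ih, rangeRW, Finset.range_add_one (n := n + 1),
      Finset.image_insert]
    by_cases h : ω ∈ nevt Y (n + 1)
    · rw [Finset.card_insert_of_notMem, Set.indicator_of_mem h, rangeRW]
      · simp
      · rw [mem_nevt_iff] at h
        simp only [Finset.mem_image, Finset.mem_range, not_exists]
        rintro k ⟨hk, hke⟩
        exact h k hk hke.symm
    · rw [Set.indicator_of_notMem h, Finset.insert_eq_self.2, rangeRW]
      · simp
      · rw [mem_nevt_iff] at h
        push_neg at h
        obtain ⟨j, hj, hje⟩ := h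
        exact Finset.mem_image.2 ⟨j, Finset.mem_range.2 hj, hje.symm⟩

lemma measurable_blk {Y : ℕ → Ω → (Fin d → ℤ)} (hY : ∀ i, Measurable (Y i)) (s m : ℕ) :
    Measurable (blk Y s m) :=
  measurable_pi_lambda _ fun t => hY (s + t)

lemma measurableSet_nevt {Y : ℕ → Ω → (Fin d → ℤ)} (hY : ∀ i, Measurable (Y i)) (k : ℕ) :
    MeasurableSet (nevt Y k) :=
  measurable_blk hY 0 k .of_discrete

lemma measurable_rangeRW {Y : ℕ → Ω → (Fin d → ℤ)} (hY : ∀ i, Measurable (Y i)) (n : ℕ) :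
    Measurable (rangeRW Y n) := by
  have : rangeRW Y n = fun ω => ∑ k ∈ Finset.range (n + 1), (nevt Y k).indicator 1 ω := by
    funext ω; exact rangeRW_eq_sum Y n ω
  rw [this]
  exact Finset.measurable_sum _ fun k _ =>
    (measurable_const.indicator (measurableSet_nevt hY k))

section Prob

variable {Y : ℕ → Ω → (Fin d → ℤ)} {P : Measure Ω} [IsProbabilityMeasure P]

lemma map_blk_eq (hY : ∀ i, Measurable (Y i))
    (hInd : ProbabilityTheory.iIndepFun Y P)
    (hId : ∀ i, ProbabilityTheory.IdentDistrib (Y i) (Y 0) P P) (s m : ℕ) :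
    P.map (blk Y s m) = Measure.pi (fun _ : Fin m => P.map (Y 0)) := by
  classical
  have hpm : IsProbabilityMeasure (P.map (Y 0)) :=
    Measure.isProbabilityMeasure_map (hY 0).aemeasurable
  refine (Measure.pi_eq fun S hS => ?_).symm
  rw [Measure.map_apply (measurable_blk hY s m) (MeasurableSet.univ_pi hS)]
  let S' : ℕ → Set (Fin d → ℤ) := fun j =>
    if h : s ≤ j ∧ j < s + m then S ⟨j - s, by omega⟩ else Set.univ
  have hS'pos : ∀ j, ∀ hj : s ≤ j ∧ j < s + m, S' j = S ⟨j - s, by omega⟩ :=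
    fun j hj => dif_pos hj
  have hpre : blk Y s m ⁻¹' (Set.univ.pi S) = ⋂ j ∈ Finset.Ico s (s + m), Y j ⁻¹' (S' j) := by
    ext ω
    simp only [Set.mem_preimage, Set.mem_pi, Set.mem_univ, forall_true_left, Set.mem_iInter,
      Finset.mem_Ico, blk]
    constructor
    · intro h j hj
      rw [hS'pos j hj]
      have h2 := h ⟨j - s, by omega⟩
      have hj2 : s + (j - s) = j := by omega
      rw [hj2] at h2
      exact h2
    · intro h t
      have hj : s ≤ s + (t : ℕ) ∧ s + (t : ℕ) < s + m :=
        ⟨Nat.le_add_right _ _, by omega⟩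
      have ht := h (s + t) hj
      rw [hS'pos _ hj] at ht
      have he : (⟨s + (t : ℕ) - s, by omega⟩ : Fin m) = t := Fin.ext (by simp)
      rwa [he] at ht
  rw [hpre, hInd.measure_inter_preimage_eq_mul (Finset.Ico s (s + m))
    (fun i _ => MeasurableSet.of_discrete)]
  rw [Finset.prod_Ico_eq_prod_range]
  have hms : s + m - s = m := by omega
  rw [hms]
  rw [← Fin.prod_univ_eq_prod_range (fun j => P (Y (s + j) ⁻¹' S' (s + j))) m]
  refine Finset.prod_congr rfl fun i _ => ?_
  have hj : s ≤ s + (i : ℕ) ∧ s + (i : ℕ) < s + m := ⟨Nat.le_add_right _ _, by omega⟩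
  have he : (⟨s + (i : ℕ) - s, by omega⟩ : Fin m) = i := Fin.ext (by simp)
  rw [hS'pos _ hj, he, Measure.map_apply (hY 0) MeasurableSet.of_discrete,
    ← (hId (s + i)).measure_mem_eq MeasurableSet.of_discrete]

lemma blk_shift (hY : ∀ i, Measurable (Y i))
    (hInd : ProbabilityTheory.iIndepFun Y P)
    (hId : ∀ i, ProbabilityTheory.IdentDistrib (Y i) (Y 0) P P) (s m : ℕ)
    (S : Set (Fin m → (Fin d → ℤ))) :
    P (blk Y s m ⁻¹' S) = P (blk Y 0 m ⁻¹' S) := by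
  rw [← Measure.map_apply (measurable_blk hY s m) MeasurableSet.of_discrete,
    ← Measure.map_apply (measurable_blk hY 0 m) MeasurableSet.of_discrete,
    map_blk_eq hY hInd hId s m, map_blk_eq hY hInd hId 0 m]

lemma blk_indep (hY : ∀ i, Measurable (Y i))
    (hInd : ProbabilityTheory.iIndepFun Y P)
    {s₁ m₁ s₂ m₂ : ℕ} (h : s₁ + m₁ ≤ s₂)
    (S₁ : Set (Fin m₁ → (Fin d → ℤ))) (S₂ : Set (Fin m₂ → (Fin d → ℤ))) :
    P (blk Y s₁ m₁ ⁻¹' S₁ ∩ blk Y s₂ m₂ ⁻¹' S₂)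
      = P (blk Y s₁ m₁ ⁻¹' S₁) * P (blk Y s₂ m₂ ⁻¹' S₂) := by
  classical
  have hdisj : Disjoint (Finset.Ico s₁ (s₁ + m₁)) (Finset.Ico s₂ (s₂ + m₂)) := by
    rw [Finset.disjoint_left]
    intro a ha ha'
    rw [Finset.mem_Ico] at ha ha'
    omega
  have h1 := hInd.indepFun_finset _ _ hdisj hY
  have hg : ∀ (s m : ℕ), Measurable
      (fun (v : ((Finset.Ico s (s + m) : Finset ℕ) : Type) → (Fin d → ℤ)) (t : Fin m) =>
        v ⟨s + t, Finset.mem_Ico.2 ⟨Nat.le_add_right _ _, Nat.add_lt_add_left t.isLt s⟩⟩) :=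
    fun s m => measurable_pi_lambda _ fun t => measurable_pi_apply _
  have h2 := h1.comp (hg s₁ m₁) (hg s₂ m₂)
  have e₁ : ((fun (v : ((Finset.Ico s₁ (s₁ + m₁) : Finset ℕ) : Type) → (Fin d → ℤ))
        (t : Fin m₁) =>
        v ⟨s₁ + t, Finset.mem_Ico.2 ⟨Nat.le_add_right _ _, Nat.add_lt_add_left t.isLt s₁⟩⟩) ∘
      (fun a (i : (Finset.Ico s₁ (s₁ + m₁) : Finset ℕ)) => Y i a)) = blk Y s₁ m₁ := rfl
  have e₂ : ((fun (v : ((Finset.Ico s₂ (s₂ + m₂) : Finset ℕ) : Type) → (Fin d → ℤ))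
        (t : Fin m₂) =>
        v ⟨s₂ + t, Finset.mem_Ico.2 ⟨Nat.le_add_right _ _, Nat.add_lt_add_left t.isLt s₂⟩⟩) ∘
      (fun a (i : (Finset.Ico s₂ (s₂ + m₂) : Finset ℕ)) => Y i a)) = blk Y s₂ m₂ := rfl
  rw [e₁, e₂] at h2
  exact h2.measure_inter_preimage_eq_mul _ _ MeasurableSet.of_discrete MeasurableSet.of_discrete

/-- probability that the walk is at a new site at time `k` -/
def aP (Y : ℕ → Ω → (Fin d → ℤ)) (P : Measure Ω) (k : ℕ) : ENNReal := P (nevt Y k)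

/-- gaps of a monotone sequence -/
def gap (h : ℕ → ℕ) : ℕ → ℕ
  | 0 => h 0
  | (i + 1) => h (i + 1) - h i

lemma gap_sum {h : ℕ → ℕ} (hm : Monotone h) : ∀ i, ∑ j ∈ Finset.range (i + 1), gap h j = h i
  | 0 => by simp [gap]
  | (i + 1) => by
    rw [Finset.sum_range_succ, gap_sum hm i]
    show h i + (h (i + 1) - h i) = h (i + 1)
    exact Nat.add_sub_cancel' (hm (Nat.le_succ i))

/-- restriction of a long block to a shorter one -/
def resz (k K : ℕ) (v : Fin K → (Fin d → ℤ)) : Fin k → (Fin d → ℤ) :=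
  fun t => if h : (t : ℕ) < K then v ⟨t, h⟩ else 0

lemma blk_resz (Y : ℕ → Ω → (Fin d → ℤ)) {k K : ℕ} (hk : k ≤ K) :
    blk Y 0 k = resz k K ∘ blk Y 0 K := by
  funext ω t
  have ht : (t : ℕ) < K := lt_of_lt_of_le t.isLt hk
  simp [blk, resz, ht]

lemma nevt_eq_pre {Y : ℕ → Ω → (Fin d → ℤ)} {k K : ℕ} (hk : k ≤ K) :
    nevt Y k = blk Y 0 K ⁻¹' (resz k K ⁻¹' newSet d k) := by
  rw [nevt, blk_resz Y hk, Set.preimage_comp]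

lemma sorted_bound (hY : ∀ i, Measurable (Y i))
    (hInd : ProbabilityTheory.iIndepFun Y P)
    (hId : ∀ i, ProbabilityTheory.IdentDistrib (Y i) (Y 0) P P)
    (q : ℕ) (h : ℕ → ℕ) (hm : Monotone h) :
    P (⋂ i ∈ Finset.range q, nevt Y (h i)) ≤ ∏ i ∈ Finset.range q, aP Y P (gap h i) := by
  induction q with
  | zero => simp
  | succ q ih =>
    cases q with
    | zero => simp [Finset.range_one, aP, gap]
    | succ q' =>
      set K := h q' with hK
      set Δ := h (q' + 1) - K with hΔ
      have hKΔ : K + Δ = h (q' + 1) := by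
        have := hm (show q' ≤ q' + 1 by omega); omega
      set T : Set (Fin K → (Fin d → ℤ)) :=
        ⋂ i ∈ Finset.range (q' + 1), resz (h i) K ⁻¹' newSet d (h i) with hT
      have hX : (⋂ i ∈ Finset.range (q' + 1), nevt Y (h i)) = blk Y 0 K ⁻¹' T := by
        rw [hT, Set.preimage_iInter₂]
        refine Set.iInter₂_congr fun i hi => ?_
        exact nevt_eq_pre (hm (by have := Finset.mem_range.1 hi; omega))
      have hD : nevt Y (h (q' + 1)) ⊆ blk Y K Δ ⁻¹' newSet d Δ := by
        intro ω hω
        rw [Set.mem_preimage, mem_blk_newSet_iff, hKΔ]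
        intro j _ hj
        exact (mem_nevt_iff Y _ ω).1 hω j hj
      calc P (⋂ i ∈ Finset.range (q' + 2), nevt Y (h i))
          = P ((⋂ i ∈ Finset.range (q' + 1), nevt Y (h i)) ∩ nevt Y (h (q' + 1))) := by
            rw [Finset.range_add_one, Finset.set_biInter_insert, Set.inter_comm]
        _ ≤ P ((blk Y 0 K ⁻¹' T) ∩ (blk Y K Δ ⁻¹' newSet d Δ)) := by
            refine measure_mono (Set.inter_subset_inter ?_ hD)
            rw [hX]
        _ = P (blk Y 0 K ⁻¹' T) * P (blk Y K Δ ⁻¹' newSet d Δ) :=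
            blk_indep hY hInd (by omega) _ _
        _ = P (⋂ i ∈ Finset.range (q' + 1), nevt Y (h i)) * aP Y P Δ := by
            rw [← hX, blk_shift hY hInd hId]; rfl
        _ ≤ (∏ i ∈ Finset.range (q' + 1), aP Y P (gap h i)) * aP Y P Δ :=
            mul_le_mul_left ih _
        _ = ∏ i ∈ Finset.range (q' + 2), aP Y P (gap h i) := by
            conv_rhs => rw [Finset.prod_range_succ]
            congr 1

/-- monotone extension of the sorted version of a tuple -/
def sortExt {q : ℕ} (g : Fin q → ℕ) : ℕ → ℕ := fun i =>
  if h : i < q then g (Tuple.sort g ⟨i, h⟩)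
  else if h' : 0 < q then g (Tuple.sort g ⟨q - 1, by omega⟩) else 0

lemma sortExt_lt {q : ℕ} (g : Fin q → ℕ) (i : Fin q) :
    sortExt g (i : ℕ) = g (Tuple.sort g i) := by
  simp [sortExt, i.isLt]

lemma sortExt_mono {q : ℕ} (g : Fin q → ℕ) : Monotone (sortExt g) := by
  intro i j hij
  have hms := Tuple.monotone_sort g
  unfold sortExt
  rcases Nat.lt_or_ge j q with hj | hj
  · have hi : i < q := lt_of_le_of_lt hij hj
    rw [dif_pos hi, dif_pos hj]
    exact hms (show (⟨i, hi⟩ : Fin q) ≤ ⟨j, hj⟩ from hij)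
  · rcases Nat.lt_or_ge i q with hi | hi
    · have hq : 0 < q := by omega
      rw [dif_pos hi, dif_neg (by omega), dif_pos hq]
      exact hms (show (⟨i, hi⟩ : Fin q) ≤ ⟨q - 1, by omega⟩ from by
        rw [Fin.mk_le_mk]; omega)
    · rw [dif_neg (show ¬ i < q by omega), dif_neg (show ¬ j < q by omega)]

lemma tuple_bound (hY : ∀ i, Measurable (Y i))
    (hInd : ProbabilityTheory.iIndepFun Y P)
    (hId : ∀ i, ProbabilityTheory.IdentDistrib (Y i) (Y 0) P P)
    {q : ℕ} (g : Fin q → ℕ) :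
    P (⋂ i, nevt Y (g i)) ≤ ∏ i ∈ Finset.range q, aP Y P (gap (sortExt g) i) := by
  have hb := sorted_bound hY hInd hId q (sortExt g) (sortExt_mono g)
  have h1 : (⋂ i ∈ Finset.range q, nevt Y (sortExt g i))
      = ⋂ i : Fin q, nevt Y (g (Tuple.sort g i)) := by
    ext ω
    simp only [Set.mem_iInter, Finset.mem_range]
    constructor
    · intro H i
      have hh := H i.val i.isLt
      rwa [sortExt_lt g i] at hh
    · intro H i hi
      have hh := H ⟨i, hi⟩
      rwa [← sortExt_lt g ⟨i, hi⟩] at hh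
  have h2 : (⋂ i : Fin q, nevt Y (g (Tuple.sort g i))) = ⋂ i, nevt Y (g i) :=
    (Tuple.sort g).surjective.iInter_comp (fun i => nevt Y (g i))
  rwa [h1, h2] at hb

lemma cast_rangeRW (n : ℕ) (ω : Ω) :
    ((rangeRW Y n ω : ℕ) : ENNReal)
      = ∑ k ∈ Finset.range (n + 1), (nevt Y k).indicator 1 ω := by
  rw [rangeRW_eq_sum Y n ω, Nat.cast_sum]
  refine Finset.sum_congr rfl fun k _ => ?_
  by_cases h : ω ∈ nevt Y k <;> simp [Set.indicator_apply, h]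

lemma lintegral_rangeRW (hY : ∀ i, Measurable (Y i)) (n : ℕ) :
    ∫⁻ ω, ((rangeRW Y n ω : ℕ) : ENNReal) ∂P = ∑ k ∈ Finset.range (n + 1), aP Y P k := by
  simp_rw [cast_rangeRW]
  calc ∫⁻ ω, ∑ k ∈ Finset.range (n + 1), (nevt Y k).indicator 1 ω ∂P
      = ∑ k ∈ Finset.range (n + 1), ∫⁻ ω, (nevt Y k).indicator 1 ω ∂P :=
        lintegral_finset_sum _ (fun k _ => measurable_const.indicator (measurableSet_nevt hY k))
    _ = ∑ k ∈ Finset.range (n + 1), aP Y P k :=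
        Finset.sum_congr rfl fun k _ => lintegral_indicator_one (measurableSet_nevt hY k)

lemma rangeRW_pow (n q : ℕ) (ω : Ω) :
    ((rangeRW Y n ω : ℕ) : ENNReal) ^ q
      = ∑ g ∈ Fintype.piFinset (fun _ : Fin q => Finset.range (n + 1)),
          ∏ i : Fin q, (nevt Y (g i)).indicator (1 : Ω → ENNReal) ω := by
  rw [cast_rangeRW,
    show (∑ k ∈ Finset.range (n + 1), (nevt Y k).indicator (1 : Ω → ENNReal) ω) ^ q
        = ∏ _i : Fin q, ∑ k ∈ Finset.range (n + 1), (nevt Y k).indicator (1 : Ω → ENNReal) ω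
      from by rw [Finset.prod_const, Finset.card_univ, Fintype.card_fin],
    Finset.prod_univ_sum]

lemma prod_indicator {q : ℕ} (g : Fin q → ℕ) (ω : Ω) :
    ∏ i : Fin q, (nevt Y (g i)).indicator (1 : Ω → ENNReal) ω
      = (⋂ i, nevt Y (g i)).indicator 1 ω := by
  by_cases h : ω ∈ ⋂ i, nevt Y (g i)
  · rw [Set.indicator_of_mem h]
    have hmem := Set.mem_iInter.1 h
    refine Finset.prod_eq_one fun i _ => by rw [Set.indicator_of_mem (hmem i)]; rfl
  · rw [Set.indicator_of_notMem h]
    obtain ⟨i, hi⟩ : ∃ i, ω ∉ nevt Y (g i) := by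
      by_contra hc; push_neg at hc; exact h (Set.mem_iInter.2 hc)
    exact Finset.prod_eq_zero (Finset.mem_univ i) (Set.indicator_of_notMem hi _)

lemma gap_le {q : ℕ} (g : Fin q → ℕ) {n : ℕ} (hg : ∀ i, g i ≤ n) {i : ℕ} (hi : i < q) :
    gap (sortExt g) i ≤ n := by
  have hval : ∀ j, ∀ hj : j < q, sortExt g j ≤ n := by
    intro j hj
    have h1 : sortExt g j = g (Tuple.sort g ⟨j, hj⟩) := sortExt_lt g ⟨j, hj⟩
    rw [h1]; exact hg _
  cases i with
  | zero => exact hval 0 hi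
  | succ i =>
    calc gap (sortExt g) (i + 1) = sortExt g (i + 1) - sortExt g i := rfl
      _ ≤ sortExt g (i + 1) := Nat.sub_le _ _
      _ ≤ n := hval _ hi

lemma fiber_eq {q : ℕ} {g : Fin q → ℕ} {Δ : Fin q → ℕ}
    (hΦ : (fun i : Fin q => gap (sortExt g) (i : ℕ)) = Δ) :
    g = fun x : Fin q => ∑ j ∈ Finset.range ((((Tuple.sort g)⁻¹ x : Fin q) : ℕ) + 1),
        (if h : j < q then Δ ⟨j, h⟩ else 0) := by
  funext x
  set i : Fin q := (Tuple.sort g)⁻¹ x with hi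
  have h1 : ∑ j ∈ Finset.range ((i : ℕ) + 1), (if h : j < q then Δ ⟨j, h⟩ else 0)
      = ∑ j ∈ Finset.range ((i : ℕ) + 1), gap (sortExt g) j := by
    refine Finset.sum_congr rfl fun j hj => ?_
    have hjq : j < q := by
      have hji := Finset.mem_range.1 hj
      have hiq := i.isLt
      omega
    rw [dif_pos hjq, ← hΦ]
  refine Eq.symm ?_
  rw [h1, gap_sum (sortExt_mono g) (i : ℕ)]
  have h2 : sortExt g (i : ℕ) = g (Tuple.sort g i) := sortExt_lt g i
  rw [h2, hi, ← Equiv.Perm.mul_apply, mul_inv_cancel, Equiv.Perm.one_apply]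

lemma fiber_card {q n : ℕ} (Δ : Fin q → ℕ) :
    (Finset.filter (fun g => (fun i : Fin q => gap (sortExt g) (i : ℕ)) = Δ)
        (Fintype.piFinset (fun _ : Fin q => Finset.range (n + 1)))).card ≤ Nat.factorial q := by
  classical
  have hsub : Finset.filter (fun g => (fun i : Fin q => gap (sortExt g) (i : ℕ)) = Δ)
        (Fintype.piFinset (fun _ : Fin q => Finset.range (n + 1)))
      ⊆ Finset.image
        (fun σ : Equiv.Perm (Fin q) => fun x : Fin q =>
          ∑ j ∈ Finset.range (((σ x : Fin q) : ℕ) + 1), (if h : j < q then Δ ⟨j, h⟩ else 0))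
        Finset.univ := by
    intro g hg
    rw [Finset.mem_filter] at hg
    exact Finset.mem_image.2 ⟨(Tuple.sort g)⁻¹, Finset.mem_univ _, (fiber_eq hg.2).symm⟩
  calc (Finset.filter _ _).card
      ≤ (Finset.image _ Finset.univ).card := Finset.card_le_card hsub
    _ ≤ (Finset.univ : Finset (Equiv.Perm (Fin q))).card := Finset.card_image_le
    _ = Nat.factorial q := by rw [Finset.card_univ, Fintype.card_perm, Fintype.card_fin]

lemma lintegral_pow_le (hY : ∀ i, Measurable (Y i))
    (hInd : ProbabilityTheory.iIndepFun Y P)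
    (hId : ∀ i, ProbabilityTheory.IdentDistrib (Y i) (Y 0) P P) (n q : ℕ) :
    ∫⁻ ω, ((rangeRW Y n ω : ℕ) : ENNReal) ^ q ∂P
      ≤ (Nat.factorial q : ENNReal) * (∑ k ∈ Finset.range (n + 1), aP Y P k) ^ q := by
  classical
  set pF := Fintype.piFinset (fun _ : Fin q => Finset.range (n + 1)) with hpF
  have hmeasI : ∀ g : Fin q → ℕ, MeasurableSet (⋂ i, nevt Y (g i)) :=
    fun g => MeasurableSet.iInter fun i => measurableSet_nevt hY (g i)
  have h1 : ∫⁻ ω, ((rangeRW Y n ω : ℕ) : ENNReal) ^ q ∂P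
      = ∑ g ∈ pF, P (⋂ i, nevt Y (g i)) := by
    have hpt : ∀ ω, ((rangeRW Y n ω : ℕ) : ENNReal) ^ q
        = ∑ g ∈ pF, (⋂ i, nevt Y (g i)).indicator 1 ω := by
      intro ω
      rw [rangeRW_pow n q ω]
      exact Finset.sum_congr rfl fun g _ => prod_indicator g ω
    simp_rw [hpt]
    calc ∫⁻ ω, ∑ g ∈ pF, (⋂ i, nevt Y (g i)).indicator 1 ω ∂P
        = ∑ g ∈ pF, ∫⁻ ω, (⋂ i, nevt Y (g i)).indicator 1 ω ∂P :=
          lintegral_finset_sum _ (fun g _ => measurable_const.indicator (hmeasI g))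
      _ = ∑ g ∈ pF, P (⋂ i, nevt Y (g i)) :=
          Finset.sum_congr rfl fun g _ => lintegral_indicator_one (hmeasI g)
  rw [h1]
  have himg : pF.image (fun g => (fun i : Fin q => gap (sortExt g) (i : ℕ))) ⊆ pF := by
    intro Δ hΔ
    obtain ⟨g, hg, rfl⟩ := Finset.mem_image.1 hΔ
    have hgn : ∀ i, g i ≤ n := by
      intro i
      have := (Fintype.mem_piFinset.1 hg) i
      rw [Finset.mem_range] at this
      omega
    refine Fintype.mem_piFinset.2 fun i => Finset.mem_range.2 ?_
    have := gap_le g hgn i.isLt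
    omega
  calc ∑ g ∈ pF, P (⋂ i, nevt Y (g i))
      ≤ ∑ g ∈ pF, ∏ i : Fin q, aP Y P (gap (sortExt g) (i : ℕ)) := by
        refine Finset.sum_le_sum fun g _ => ?_
        refine (tuple_bound hY hInd hId g).trans (le_of_eq ?_)
        exact (Fin.prod_univ_eq_prod_range (fun i => aP Y P (gap (sortExt g) i)) q).symm
    _ = ∑ Δ ∈ pF.image (fun g => (fun i : Fin q => gap (sortExt g) (i : ℕ))),
          (Finset.filter (fun g => (fun i : Fin q => gap (sortExt g) (i : ℕ)) = Δ) pF).card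
            • ∏ i : Fin q, aP Y P (Δ i) :=
        Finset.sum_comp (fun Δ : Fin q → ℕ => ∏ i : Fin q, aP Y P (Δ i))
          (fun g => (fun i : Fin q => gap (sortExt g) (i : ℕ)))
    _ ≤ ∑ Δ ∈ pF.image (fun g => (fun i : Fin q => gap (sortExt g) (i : ℕ))),
          (Nat.factorial q : ENNReal) * ∏ i : Fin q, aP Y P (Δ i) := by
        refine Finset.sum_le_sum fun Δ _ => ?_
        rw [nsmul_eq_mul]
        exact mul_le_mul_left (Nat.cast_le.2 (fiber_card Δ)) _
    _ ≤ ∑ Δ ∈ pF, (Nat.factorial q : ENNReal) * ∏ i : Fin q, aP Y P (Δ i) :=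
        Finset.sum_le_sum_of_subset himg
    _ = (Nat.factorial q : ENNReal) * ∑ Δ ∈ pF, ∏ i : Fin q, aP Y P (Δ i) := by
        rw [Finset.mul_sum]
    _ = (Nat.factorial q : ENNReal) * (∑ k ∈ Finset.range (n + 1), aP Y P k) ^ q := by
        rw [← Finset.prod_univ_sum, Finset.prod_const, Finset.card_univ, Fintype.card_fin]

lemma aP_zero : aP Y P 0 = 1 := by
  have : nevt Y 0 = Set.univ := by
    ext ω
    rw [mem_nevt_iff]
    simp
  rw [aP, this, measure_univ]

lemma aP_le_one (k : ℕ) : aP Y P k ≤ 1 := prob_le_one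

end Prob

end MomentAux

open MomentAux in
/-- **Moment bound for the range of an arbitrary random walk**: for every `p ≥ 1` there is
a constant `C_p > 0`, depending only on `p`, such that `E[R_n^{2p}] ≤ C_p (E[R_n])^{2p}`
for all `n ≥ 1`. -/
theorem moment_range_le
    {d : ℕ} (hd : 1 ≤ d) (p : ℕ) (hp : 1 ≤ p) :
    ∃ C : ℝ, 0 < C ∧
      ∀ (Ω : Type) (_ : MeasurableSpace Ω) (P : Measure Ω), IsProbabilityMeasure P →
        ∀ Y : ℕ → Ω → (Fin d → ℤ), (∀ i, Measurable (Y i)) →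
          ProbabilityTheory.iIndepFun Y P →
          (∀ i, ProbabilityTheory.IdentDistrib (Y i) (Y 0) P P) →
          ∀ n : ℕ, 1 ≤ n →
            (∫ ω, (rangeRW Y n ω : ℝ) ^ (2 * p) ∂P)
              ≤ C * (∫ ω, (rangeRW Y n ω : ℝ) ∂P) ^ (2 * p) := by
  classical
  refine ⟨(Nat.factorial (2 * p) : ℝ), by
    exact_mod_cast Nat.cast_pos.2 (Nat.factorial_pos (2 * p)), ?_⟩
  intro Ω mΩ P hP Y hY hInd hId n hn
  haveI := hP
  set L : ENNReal := ∑ k ∈ Finset.range (n + 1), aP Y P k with hL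
  have hLtop : L ≠ ⊤ := by
    refine ne_top_of_le_ne_top (ENNReal.natCast_ne_top (n + 1)) ?_
    rw [hL]
    calc ∑ k ∈ Finset.range (n + 1), aP Y P k
        ≤ ∑ _k ∈ Finset.range (n + 1), 1 :=
          Finset.sum_le_sum fun k _ => aP_le_one k
      _ = ((n + 1 : ℕ) : ENNReal) := by simp
  have hmain := lintegral_pow_le hY hInd hId n (2 * p)
  have hmeasR : Measurable fun ω => ((rangeRW Y n ω : ℕ) : ℝ) :=
    (Measurable.of_discrete (f := (Nat.cast : ℕ → ℝ))).comp (measurable_rangeRW hY n)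
  have hconv1 : ∫ ω, ((rangeRW Y n ω : ℕ) : ℝ) ∂P = L.toReal := by
    rw [integral_eq_lintegral_of_nonneg_ae (ae_of_all _ fun ω => by positivity)
      hmeasR.aestronglyMeasurable]
    congr 1
    simp_rw [ENNReal.ofReal_natCast]
    rw [lintegral_rangeRW hY n]
  have hconv2 : ∫ ω, ((rangeRW Y n ω : ℕ) : ℝ) ^ (2 * p) ∂P
      = (∫⁻ ω, ((rangeRW Y n ω : ℕ) : ENNReal) ^ (2 * p) ∂P).toReal := by
    rw [integral_eq_lintegral_of_nonneg_ae (ae_of_all _ fun ω => by positivity)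
      ((hmeasR.pow_const _).aestronglyMeasurable)]
    congr 1
    refine lintegral_congr fun ω => ?_
    rw [ENNReal.ofReal_pow (by positivity), ENNReal.ofReal_natCast]
  rw [hconv2, hconv1]
  have hfin : (Nat.factorial (2 * p) : ENNReal) * L ^ (2 * p) ≠ ⊤ :=
    ENNReal.mul_ne_top (ENNReal.natCast_ne_top _) (ENNReal.pow_ne_top hLtop)
  calc (∫⁻ ω, ((rangeRW Y n ω : ℕ) : ENNReal) ^ (2 * p) ∂P).toReal
      ≤ ((Nat.factorial (2 * p) : ENNReal) * L ^ (2 * p)).toReal :=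
        ENNReal.toReal_mono hfin hmain
    _ = (Nat.factorial (2 * p) : ℝ) * L.toReal ^ (2 * p) := by
        rw [ENNReal.toReal_mul, ENNReal.toReal_pow]; simp


end
end

section
/- Let t > 0, β ∈ (0,1], and let g : [0,t] → ℝ be β-Hölder continuous, i.e. there is C > 0 with |g(u) − g(v)| ≤ C|u − v|^β for all u, v ∈ [0,t]. Let χ ∈ (−β, 0). Then: (a) the function s ↦ (g(t) − g(t−s)) · s^{χ−1} is Lebesgue integrable on (0,t); (b) ε^χ · (g(t) − g(t−ε)) → 0 as ε → 0⁺; and consequently (c) the limit lim_{ε→0⁺} [ t^χ g(t) − ε^χ (g(t) − g(t−ε)) − χ ∫_ε^t (g(t) − g(t−s)) s^{χ−1} ds ] exists and equals t^χ g(t) − χ ∫_0^t (g(t) − g(t−s)) s^{χ−1} ds. -/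
open MeasureTheory Filter Topology Set

noncomputable section

/-- **Definition of the singular Young integral `∫_0^t (t-s)^χ dg(s)` for Hölder `g` and
`χ ∈ (-β, 0)`** (Appendix A): if `g` is `β`-Hölder on `[0,t]` and `-β < χ < 0`, then
(a) `s ↦ (g(t) - g(t-s)) s^{χ-1}` is Lebesgue integrable on `(0,t)`;
(b) `ε^χ (g(t) - g(t-ε)) → 0` as `ε → 0⁺`;
(c) `t^χ g(t) - ε^χ (g(t) - g(t-ε)) - χ ∫_ε^t (g(t) - g(t-s)) s^{χ-1} ds` converges, as
`ε → 0⁺`, to `t^χ g(t) - χ ∫_0^t (g(t) - g(t-s)) s^{χ-1} ds`. -/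
theorem singular_young_integral_of_holder
    (t β C χ : ℝ) (ht : 0 < t) (hβ₀ : 0 < β) (hβ₁ : β ≤ 1) (hC : 0 < C)
    (g : ℝ → ℝ)
    (hg : ∀ u ∈ Set.Icc 0 t, ∀ v ∈ Set.Icc 0 t, |g u - g v| ≤ C * |u - v| ^ β)
    (hχ₀ : -β < χ) (hχ₁ : χ < 0) :
    IntegrableOn (fun s => (g t - g (t - s)) * s ^ (χ - 1)) (Set.Ioc 0 t) volume ∧
    Tendsto (fun ε => ε ^ χ * (g t - g (t - ε))) (nhdsWithin 0 (Set.Ioi 0)) (nhds 0) ∧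
    Tendsto
      (fun ε => t ^ χ * g t - ε ^ χ * (g t - g (t - ε)) -
        χ * ∫ s in Set.Ioc ε t, (g t - g (t - s)) * s ^ (χ - 1))
      (nhdsWithin 0 (Set.Ioi 0))
      (nhds (t ^ χ * g t - χ * ∫ s in Set.Ioc 0 t, (g t - g (t - s)) * s ^ (χ - 1))) := by
  have hβχ : 0 < β + χ := by linarith
  set f : ℝ → ℝ := fun s => (g t - g (t - s)) * s ^ (χ - 1) with hf
  -- Hölder bound for the difference
  have hdiff : ∀ s ∈ Set.Ioc 0 t, |g t - g (t - s)| ≤ C * s ^ β := by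
    intro s hs
    have hts : t - s ∈ Set.Icc 0 t := ⟨by linarith [hs.2], by linarith [hs.1.le]⟩
    have := hg t ⟨ht.le, le_refl t⟩ (t - s) hts
    simpa [show t - (t - s) = s by ring, abs_of_pos hs.1] using this
  -- pointwise bound for f
  have hbound : ∀ s ∈ Set.Ioc 0 t, ‖f s‖ ≤ C * s ^ (β + χ - 1) := by
    intro s hs
    have hs0 : 0 < s := hs.1
    have hrp : (0:ℝ) < s ^ (χ - 1) := Real.rpow_pos_of_pos hs0 _
    have : ‖f s‖ = |g t - g (t - s)| * s ^ (χ - 1) := by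
      rw [Real.norm_eq_abs, abs_mul, abs_of_pos hrp]
    rw [this]
    calc |g t - g (t - s)| * s ^ (χ - 1) ≤ (C * s ^ β) * s ^ (χ - 1) := by
          exact mul_le_mul_of_nonneg_right (hdiff s hs) hrp.le
      _ = C * s ^ (β + χ - 1) := by
          rw [mul_assoc, ← Real.rpow_add hs0]; ring_nf
  -- the dominating function is integrable
  have hdom : IntegrableOn (fun s => C * s ^ (β + χ - 1)) (Set.Ioc 0 t) volume := by
    have h1 : IntervalIntegrable (fun x : ℝ => x ^ (β + χ - 1)) volume 0 t :=
      intervalIntegral.intervalIntegrable_rpow' (by linarith)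
    exact (h1.const_mul C).1
  -- continuity of g on [0,t]
  have hgc : ContinuousOn g (Set.Icc 0 t) := by
    intro x hx
    rw [Metric.continuousWithinAt_iff]
    intro ε hε
    have hεC : (0:ℝ) < ε / C := div_pos hε hC
    refine ⟨(ε / C) ^ (1 / β), Real.rpow_pos_of_pos hεC _, fun y hy hdy => ?_⟩
    have hlt : |y - x| ^ β < ε / C := by
      have h1 : |y - x| ^ β < ((ε / C) ^ (1 / β)) ^ β := by
        apply Real.rpow_lt_rpow (abs_nonneg _) _ hβ₀
        simpa [Real.dist_eq] using hdy
      have h2 : ((ε / C) ^ (1 / β)) ^ β = ε / C := by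
        rw [← Real.rpow_mul hεC.le]
        simp [one_div, inv_mul_cancel₀ hβ₀.ne']
      rw [h2] at h1; exact h1
    calc dist (g y) (g x) = |g y - g x| := Real.dist_eq _ _
      _ ≤ C * |y - x| ^ β := hg y hy x hx
      _ < C * (ε / C) := by exact (mul_lt_mul_iff_right₀ hC).mpr hlt
      _ = ε := mul_div_cancel₀ ε hC.ne'
  -- continuity of f on Ioc 0 t
  have hfc : ContinuousOn f (Set.Ioc 0 t) := by
    apply ContinuousOn.mul
    · apply ContinuousOn.sub continuousOn_const
      apply hgc.comp (continuous_const.sub continuous_id).continuousOn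
      intro s hs
      exact ⟨by simp; linarith [hs.2], by simp; linarith [hs.1.le]⟩
    · intro s hs
      exact (Real.continuousAt_rpow_const s (χ - 1) (Or.inl hs.1.ne')).continuousWithinAt
  -- (a)
  have hint : IntegrableOn f (Set.Ioc 0 t) volume := by
    refine Integrable.mono' hdom (hfc.aestronglyMeasurable measurableSet_Ioc) ?_
    filter_upwards [ae_restrict_mem measurableSet_Ioc] with s hs using hbound s hs
  -- generic limit of C' * ε^p → 0
  have hpow0 : ∀ p : ℝ, 0 < p → ∀ C' : ℝ,
      Tendsto (fun ε : ℝ => C' * ε ^ p) (𝓝[>] (0:ℝ)) (𝓝 0) := by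
    intro p hp C'
    have h1 : Tendsto (fun ε : ℝ => ε ^ p) (𝓝 (0:ℝ)) (𝓝 ((0:ℝ) ^ p)) :=
      (Real.continuousAt_rpow_const 0 p (Or.inr hp.le)).tendsto
    rw [Real.zero_rpow hp.ne'] at h1
    have h2 : Tendsto (fun ε : ℝ => C' * ε ^ p) (𝓝[>] (0:ℝ)) (𝓝 (C' * 0)) :=
      (h1.const_mul C').mono_left nhdsWithin_le_nhds
    simpa using h2
  -- (b)
  have hb : Tendsto (fun ε => ε ^ χ * (g t - g (t - ε))) (𝓝[>] (0:ℝ)) (𝓝 0) := by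
    apply squeeze_zero_norm' _ (hpow0 (β + χ) hβχ C)
    filter_upwards [Ioc_mem_nhdsGT_of_mem ⟨le_refl 0, ht⟩] with ε hε
    have hε0 : 0 < ε := hε.1
    have hrp : (0:ℝ) < ε ^ χ := Real.rpow_pos_of_pos hε0 _
    calc ‖ε ^ χ * (g t - g (t - ε))‖ = ε ^ χ * |g t - g (t - ε)| := by
          rw [Real.norm_eq_abs, abs_mul, abs_of_pos hrp]
      _ ≤ ε ^ χ * (C * ε ^ β) := mul_le_mul_of_nonneg_left (hdiff ε hε) hrp.le
      _ = C * (ε ^ β * ε ^ χ) := by ring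
      _ = C * ε ^ (β + χ) := by rw [← Real.rpow_add hε0]
  -- tail integral tends to 0
  have htail : Tendsto (fun ε => ∫ s in Set.Ioc 0 ε, f s) (𝓝[>] (0:ℝ)) (𝓝 0) := by
    apply squeeze_zero_norm' _ (hpow0 (β + χ) hβχ (C / (β + χ)))
    filter_upwards [Ioc_mem_nhdsGT_of_mem ⟨le_refl 0, ht⟩] with ε hε
    have hε0 : 0 < ε := hε.1
    have hsub : Set.Ioc 0 ε ⊆ Set.Ioc 0 t := Set.Ioc_subset_Ioc_right hε.2
    have hdom' : IntegrableOn (fun s => C * s ^ (β + χ - 1)) (Set.Ioc 0 ε) volume :=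
      hdom.mono_set hsub
    have h1 : ‖∫ s in Set.Ioc 0 ε, f s‖ ≤ ∫ s in Set.Ioc 0 ε, C * s ^ (β + χ - 1) := by
      apply norm_integral_le_of_norm_le hdom'
      filter_upwards [ae_restrict_mem measurableSet_Ioc] with s hs using
        hbound s (hsub hs)
    have h2 : ∫ s in Set.Ioc 0 ε, C * s ^ (β + χ - 1) = C / (β + χ) * ε ^ (β + χ) := by
      rw [← intervalIntegral.integral_of_le hε0.le]
      rw [intervalIntegral.integral_const_mul]
      rw [integral_rpow (Or.inl (by linarith))]
      rw [Real.zero_rpow (by linarith : β + χ - 1 + 1 ≠ 0)]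
      have : β + χ - 1 + 1 = β + χ := by ring
      rw [this]
      ring
    rw [h2] at h1; exact h1
  -- splitting the integral
  have hsplit : ∀ ε ∈ Set.Ioc (0:ℝ) t,
      ∫ s in Set.Ioc ε t, f s = (∫ s in Set.Ioc 0 t, f s) - ∫ s in Set.Ioc 0 ε, f s := by
    intro ε hε
    have hun : Set.Ioc (0:ℝ) t = Set.Ioc 0 ε ∪ Set.Ioc ε t :=
      (Set.Ioc_union_Ioc_eq_Ioc hε.1.le hε.2).symm
    have h := setIntegral_union (Set.Ioc_disjoint_Ioc_of_le le_rfl) measurableSet_Ioc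
      (hint.mono_set (Set.Ioc_subset_Ioc_right hε.2))
      (hint.mono_set (Set.Ioc_subset_Ioc_left hε.1.le))
    rw [← hun] at h
    rw [h]; ring
  -- integral convergence
  have hI : Tendsto (fun ε => ∫ s in Set.Ioc ε t, f s) (𝓝[>] (0:ℝ))
      (𝓝 (∫ s in Set.Ioc 0 t, f s)) := by
    have h1 : Tendsto (fun ε => (∫ s in Set.Ioc 0 t, f s) - ∫ s in Set.Ioc 0 ε, f s)
        (𝓝[>] (0:ℝ)) (𝓝 (∫ s in Set.Ioc 0 t, f s)) := by
      simpa using tendsto_const_nhds.sub htail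
    apply h1.congr'
    filter_upwards [Ioc_mem_nhdsGT_of_mem ⟨le_refl 0, ht⟩] with ε hε
    exact (hsplit ε hε).symm
  refine ⟨hint, hb, ?_⟩
  have h1 : Tendsto (fun ε : ℝ => t ^ χ * g t - ε ^ χ * (g t - g (t - ε)))
      (𝓝[>] (0:ℝ)) (𝓝 (t ^ χ * g t - 0)) :=
    tendsto_const_nhds.sub hb
  have h2 := h1.sub (hI.const_mul χ)
  rw [sub_zero] at h2
  exact h2

end
end
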